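/- arXiv:1112.0736 — 4 statements merged into one kernel-verified Lean document; each statement's English description precedes it below -/
import Mathlib

section
/- For any bipartite density matrix ρ^{AB} and any rank-one projective measurement {Π_k^B} on B, the average post-measurement entropy of A is at most the global entropy: Σ_k p_k S(ρ_k^A) ≤ S(ρ^{AB}). -/
open scoped Kronecker Classical ComplexOrder
open Matrix

noncomputable section

variable {n : Type*} [Fintype n] [DecidableEq n]

/-- A density matrix: positive semidefinite with unit trace. -/
def IsDensity (ρ : Matrix n n ℂ) : Prop := ρ.PosSemidef ∧ ρ.trace = 1

/-- von Neumann entropy (base 2), via eigenvalues; junk value 0 for non-Hermitian input. -/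
def vnEntropy (A : Matrix n n ℂ) : ℝ :=
  if h : A.IsHermitian then -∑ i, h.eigenvalues i * Real.logb 2 (h.eigenvalues i) else 0

/-- Matrix logarithm (base 2) via the spectral decomposition; junk value 0 for
non-Hermitian input.  The convention `Real.logb 2 0 = 0` handles zero eigenvalues. -/
def matLog (A : Matrix n n ℂ) : Matrix n n ℂ :=
  if h : A.IsHermitian then
    (h.eigenvectorUnitary : Matrix n n ℂ) *
      Matrix.diagonal (fun i => (Real.logb 2 (h.eigenvalues i) : ℂ)) *
      (star (h.eigenvectorUnitary : Matrix n n ℂ))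
  else 0

/-- Quantum relative entropy  S(ρ‖σ) = Tr ρ (log₂ ρ − log₂ σ)  (real part of the trace). -/
def relEntropy (ρ σ : Matrix n n ℂ) : ℝ :=
  ((ρ * (matLog ρ - matLog σ)).trace).re

variable {a b : Type*} [Fintype a] [DecidableEq a] [Fintype b] [DecidableEq b]
variable {ι : Type*} [Fintype ι]

/-- Partial trace over the first (A) factor. -/
def ptraceA (ρ : Matrix (a × b) (a × b) ℂ) : Matrix b b ℂ := fun i j => ∑ x, ρ (x, i) (x, j)

/-- Partial trace over the second (B) factor. -/
def ptraceB (ρ : Matrix (a × b) (a × b) ℂ) : Matrix a a ℂ := fun i j => ∑ y, ρ (i, y) (j, y)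

/-- A projective measurement: mutually orthogonal Hermitian projections summing to the identity. -/
def IsProjMeas (P : ι → Matrix b b ℂ) : Prop :=
  (∀ k, (P k).IsHermitian) ∧ (∀ j k, P j * P k = if j = k then P k else 0) ∧ ∑ k, P k = 1

/-- A rank-one projective measurement (each projection has trace one). -/
def IsRankOneMeas (P : ι → Matrix b b ℂ) : Prop :=
  IsProjMeas P ∧ ∀ k, (P k).trace = 1

/-- The measurement leaves the state `ρB` invariant. -/
def Invariant (P : ι → Matrix b b ℂ) (ρB : Matrix b b ℂ) : Prop :=
  ∑ k, P k * ρB * P k = ρB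

/-- Post-measurement state for a measurement on the B subsystem. -/
def postMeas (P : ι → Matrix b b ℂ) (ρ : Matrix (a × b) (a × b) ℂ) :
    Matrix (a × b) (a × b) ℂ :=
  ∑ k, ((1 : Matrix a a ℂ) ⊗ₖ P k) * ρ * ((1 : Matrix a a ℂ) ⊗ₖ P k)

/-- Probability of outcome `k`. -/
def probOf (P : ι → Matrix b b ℂ) (ρ : Matrix (a × b) (a × b) ℂ) (k : ι) : ℝ :=
  (((1 : Matrix a a ℂ) ⊗ₖ P k) * ρ).trace.re

/-- Conditional state of A given outcome `k`. -/
def condA (P : ι → Matrix b b ℂ) (ρ : Matrix (a × b) (a × b) ℂ) (k : ι) : Matrix a a ℂ :=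
  ((((1 : Matrix a a ℂ) ⊗ₖ P k) * ρ).trace)⁻¹ •
    ptraceB (((1 : Matrix a a ℂ) ⊗ₖ P k) * ρ * ((1 : Matrix a a ℂ) ⊗ₖ P k))

/-- Relative entropy of nonlocality: supremum of S(ρ‖ρ̃) over rank-one projective
measurements on B leaving ρ^B invariant. -/
def NRE (ρ : Matrix (a × b) (a × b) ℂ) : ℝ :=
  sSup {x | ∃ P : b → Matrix b b ℂ, IsRankOneMeas P ∧ Invariant P (ptraceA ρ) ∧
    x = relEntropy ρ (postMeas P ρ)}

/-- Minimal quantum side information. -/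
def Schi (ρ : Matrix (a × b) (a × b) ℂ) : ℝ :=
  sInf {x | ∃ P : b → Matrix b b ℂ, IsRankOneMeas P ∧ Invariant P (ptraceA ρ) ∧
    x = vnEntropy (ptraceB ρ) - ∑ k, probOf P ρ k * vnEntropy (condA P ρ k)}

/-- `x * log₂ x`, with the junk convention at `0`. -/
def xlogb (x : ℝ) : ℝ := x * Real.logb 2 x

lemma xlogb_zero : xlogb 0 = 0 := by simp [xlogb]

lemma convexOn_xlogb : ConvexOn ℝ (Set.Ici 0) xlogb := by
  have h := (Real.convexOn_mul_log).smul (c := (Real.log 2)⁻¹) (by positivity)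
  convert h using 1 <;> try rfl
  funext t
  simp only [xlogb, Real.logb, smul_eq_mul, Pi.smul_apply]
  ring

/-- Jensen's inequality for `xlogb` with sub-probability weights. -/
lemma jensen_slack {ι : Type*} [Fintype ι] (w x : ι → ℝ) (hw : ∀ i, 0 ≤ w i)
    (hx : ∀ i, 0 ≤ x i) (hs : ∑ i, w i ≤ 1) :
    xlogb (∑ i, w i * x i) ≤ ∑ i, w i * xlogb (x i) := by
  set W : Option ι → ℝ := fun o => o.elim (1 - ∑ i, w i) w with hW
  set X : Option ι → ℝ := fun o => o.elim 0 x with hX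
  have h := convexOn_xlogb.map_sum_le (t := (Finset.univ : Finset (Option ι))) (w := W) (p := X)
    (by rintro (_|i) _ <;> simp [hW, hs, hw, sub_nonneg])
    (by simp [hW, Fintype.sum_option])
    (by rintro (_|i) _ <;> simp [hX, hx])
  simpa [Fintype.sum_option, hW, hX, xlogb_zero, smul_eq_mul] using h

/-- Classical subadditivity of entropy (in `xlogb` form). -/
lemma subadd {K M : Type*} [Fintype K] [Fintype M] (r : K → M → ℝ)
    (hr : ∀ k m, 0 ≤ r k m) (htot : ∑ k, ∑ m, r k m = 1) :
    ∑ m, xlogb (∑ k, r k m) + ∑ k, xlogb (∑ m, r k m) ≤ ∑ k, ∑ m, xlogb (r k m) := by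
  set lam : M → ℝ := fun m => ∑ k, r k m with hlam
  set p : K → ℝ := fun k => ∑ m, r k m with hp
  have hlam0 : ∀ m, 0 ≤ lam m := fun m => Finset.sum_nonneg fun k _ => hr k m
  have hp0 : ∀ k, 0 ≤ p k := fun k => Finset.sum_nonneg fun m _ => hr k m
  have hrl : ∀ k m, r k m ≤ lam m := fun k m =>
    Finset.single_le_sum (fun k _ => hr k m) (Finset.mem_univ k)
  have hrp : ∀ k m, r k m ≤ p k := fun k m =>
    Finset.single_le_sum (fun m _ => hr k m) (Finset.mem_univ m)
  have key : ∀ k m, r k m * Real.logb 2 (lam m) + r k m * Real.logb 2 (p k) - xlogb (r k m)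
      ≤ (lam m * p k - r k m) / Real.log 2 := by
    intro k m
    rcases eq_or_lt_of_le (hr k m) with h0 | h0
    · rw [← h0]
      simp only [xlogb_zero, zero_mul, add_zero, sub_zero, zero_add, sub_zero]
      exact div_nonneg (mul_nonneg (hlam0 m) (hp0 k)) (Real.log_nonneg (by norm_num))
    · have hlm : 0 < lam m := lt_of_lt_of_le h0 (hrl k m)
      have hpk : 0 < p k := lt_of_lt_of_le h0 (hrp k m)
      have hlog : Real.log (lam m * p k / r k m) ≤ lam m * p k / r k m - 1 :=
        Real.log_le_sub_one_of_pos (by positivity)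
      have hsplit : Real.logb 2 (lam m) + Real.logb 2 (p k) - Real.logb 2 (r k m)
          = Real.log (lam m * p k / r k m) / Real.log 2 := by
        rw [Real.log_div (by positivity) (ne_of_gt h0), Real.log_mul (ne_of_gt hlm) (ne_of_gt hpk)]
        simp [Real.logb]
        ring
      have h2 : (0:ℝ) < Real.log 2 := Real.log_pos (by norm_num)
      calc r k m * Real.logb 2 (lam m) + r k m * Real.logb 2 (p k) - xlogb (r k m)
          = r k m * (Real.logb 2 (lam m) + Real.logb 2 (p k) - Real.logb 2 (r k m)) := by
            simp [xlogb]; ring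
        _ = r k m * (Real.log (lam m * p k / r k m) / Real.log 2) := by rw [hsplit]
        _ ≤ r k m * ((lam m * p k / r k m - 1) / Real.log 2) := by
            have h2 : (0:ℝ) < Real.log 2 := Real.log_pos (by norm_num)
            gcongr
        _ = (lam m * p k - r k m) / Real.log 2 := by
            field_simp
  -- sum the termwise bound
  have hsum : ∑ k, ∑ m, (r k m * Real.logb 2 (lam m) + r k m * Real.logb 2 (p k) - xlogb (r k m))
      ≤ ∑ k, ∑ m, (lam m * p k - r k m) / Real.log 2 := by
    apply Finset.sum_le_sum; intro k _; apply Finset.sum_le_sum; intro m _; exact key k m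
  have hRHS : ∑ k, ∑ m, (lam m * p k - r k m) / Real.log 2 = 0 := by
    have h1 : ∑ k, ∑ m, lam m * p k = 1 := by
      have : ∑ m, lam m = 1 := by rw [hlam]; rw [Finset.sum_comm]; exact htot
      calc ∑ k, ∑ m, lam m * p k = ∑ k, (∑ m, lam m) * p k := by
            simp [Finset.sum_mul]
        _ = ∑ k, p k := by simp [this]
        _ = 1 := htot
    simp only [sub_div, Finset.sum_sub_distrib, ← Finset.sum_div]
    rw [h1, htot]
    simp
  have hLHS : ∑ m, xlogb (lam m) + ∑ k, xlogb (p k) - ∑ k, ∑ m, xlogb (r k m)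
      = ∑ k, ∑ m, (r k m * Real.logb 2 (lam m) + r k m * Real.logb 2 (p k) - xlogb (r k m)) := by
    simp only [Finset.sum_add_distrib, Finset.sum_sub_distrib]
    congr 1
    congr 1
    · rw [Finset.sum_comm]
      simp [xlogb, hlam, Finset.sum_mul]
    · simp [xlogb, hp, Finset.sum_mul]
  linarith [hsum.trans_eq hRHS, hLHS]

lemma star_mul_self_eq_normSq (z : ℂ) : star z * z = (Complex.normSq z : ℂ) := by
  rw [Complex.star_def, ← Complex.normSq_eq_conj_mul_self]

lemma mul_star_self_eq_normSq (z : ℂ) : z * star z = (Complex.normSq z : ℂ) := by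
  rw [Complex.star_def, Complex.mul_conj]

/-- Diagonal entries of a positive semidefinite matrix have nonnegative real part. -/
lemma psd_diag_re_nonneg {M : Type*} [Fintype M] [DecidableEq M] {Q : Matrix M M ℂ}
    (hQ : Q.PosSemidef) (m : M) : 0 ≤ (Q m m).re := by
  have h := hQ.re_dotProduct_nonneg (Pi.single m 1)
  simpa [dotProduct, mulVec, Pi.single_apply, Finset.sum_ite_eq, Finset.sum_ite_eq'] using h

/-- Key majorization step: if `Gᴴ G` is diagonal with entries `ν`, then the row-norm
vector of `G` has larger `∑ xlogb` than `ν`. -/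
lemma specMix' {M I : Type*} [Fintype M] [DecidableEq M] [Fintype I] [DecidableEq I]
    (G : Matrix M I ℂ) (ν : I → ℝ)
    (hG : Gᴴ * G = Matrix.diagonal (fun i => (ν i : ℂ))) :
    ∑ m, xlogb (∑ i, Complex.normSq (G m i)) ≤ ∑ i, xlogb (ν i) := by
  have hν : ∀ i, ν i = ∑ m, Complex.normSq (G m i) := by
    intro i
    have h := congrFun (congrFun hG i) i
    simp only [Matrix.mul_apply, Matrix.conjTranspose_apply, Matrix.diagonal_apply_eq] at h
    have : ((∑ m, Complex.normSq (G m i) : ℝ) : ℂ) = ((ν i : ℝ) : ℂ) := by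
      rw [← h]
      push_cast
      exact Finset.sum_congr rfl fun m _ => (star_mul_self_eq_normSq (G m i)).symm
    exact_mod_cast this.symm
  have hν0 : ∀ i, 0 ≤ ν i := fun i => (hν i) ▸ Finset.sum_nonneg fun m _ => Complex.normSq_nonneg _
  have hzero : ∀ i, ν i = 0 → ∀ m, G m i = 0 := by
    intro i hi m
    have h : ∑ m, Complex.normSq (G m i) = 0 := by rw [← hν i, hi]
    have := (Finset.sum_eq_zero_iff_of_nonneg (fun m _ => Complex.normSq_nonneg (G m i))).mp
      h m (Finset.mem_univ m)
    exact Complex.normSq_eq_zero.mp this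
  set D : M → I → ℝ := fun m i => if ν i = 0 then 0 else Complex.normSq (G m i) / ν i with hD
  have hD0 : ∀ m i, 0 ≤ D m i := by
    intro m i; rw [hD]; dsimp only
    split
    · exact le_refl 0
    · exact div_nonneg (Complex.normSq_nonneg _) (hν0 i)
  have hd : ∀ m, ∑ i, Complex.normSq (G m i) = ∑ i, D m i * ν i := by
    intro m
    apply Finset.sum_congr rfl
    intro i _
    by_cases hi : ν i = 0
    · simp [hD, hi, hzero i hi m]
    · simp only [hD, if_neg hi]
      field_simp
  have hcol : ∀ i, ν i ≠ 0 → ∑ m, D m i = 1 := by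
    intro i hi
    rw [hD]; dsimp only
    simp only [if_neg hi]
    rw [← Finset.sum_div, ← hν i, div_self hi]
  -- Bessel-type bound on the row sums, via the idempotent `H Hᴴ`
  have hrow : ∀ m, ∑ i, D m i ≤ 1 := by
    intro m
    set c : I → ℂ := fun i => if ν i = 0 then 0 else ((Real.sqrt (ν i))⁻¹ : ℝ) with hc
    set H : Matrix M I ℂ := G * Matrix.diagonal c with hH
    have hHH : Hᴴ * H = Matrix.diagonal (fun i => if ν i = 0 then 0 else (1:ℂ)) := by
      rw [hH, Matrix.conjTranspose_mul, Matrix.diagonal_conjTranspose]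
      calc (Matrix.diagonal (star c)) * Gᴴ * (G * Matrix.diagonal c)
          = Matrix.diagonal (star c) * (Gᴴ * G) * Matrix.diagonal c := by
            simp only [Matrix.mul_assoc]
        _ = Matrix.diagonal (star c) * Matrix.diagonal (fun i => (ν i : ℂ)) *
              Matrix.diagonal c := by rw [hG]
        _ = Matrix.diagonal (fun i => star (c i) * (ν i : ℂ) * c i) := by
            rw [Matrix.diagonal_mul_diagonal, Matrix.diagonal_mul_diagonal]
            rfl
        _ = Matrix.diagonal (fun i => if ν i = 0 then 0 else (1:ℂ)) := by
            apply congrArg Matrix.diagonal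
            funext i
            simp only [hc, Pi.star_apply]
            by_cases hi : ν i = 0
            · simp [hi]
            · have hνpos : 0 < ν i := lt_of_le_of_ne (hν0 i) (Ne.symm hi)
              have hs0 : Real.sqrt (ν i) ≠ 0 := by positivity
              have hr : ((Real.sqrt (ν i))⁻¹ : ℝ) * (ν i) * (Real.sqrt (ν i))⁻¹ = 1 := by
                rw [mul_comm, ← mul_assoc, ← mul_inv, Real.mul_self_sqrt (hν0 i),
                  inv_mul_cancel₀ hi]
              simp only [if_neg hi, Complex.star_def, Complex.conj_ofReal]
              exact_mod_cast congrArg (Complex.ofReal) hr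
    have hHe : H * Matrix.diagonal (fun i => if ν i = 0 then 0 else (1:ℂ)) = H := by
      rw [hH, Matrix.mul_assoc, Matrix.diagonal_mul_diagonal]
      apply congrArg (fun X => G * X)
      apply congrArg Matrix.diagonal
      funext i
      by_cases hi : ν i = 0 <;> simp [hc, hi]
    set Q : Matrix M M ℂ := H * Hᴴ with hQ
    have hQidem : Q * Q = Q := by
      have assoc1 : Q * Q = H * (Hᴴ * H) * Hᴴ := by
        rw [hQ]; simp only [Matrix.mul_assoc]
      rw [assoc1, hHH, hHe, ← hQ]
    have hQherm : Q.IsHermitian := Matrix.isHermitian_mul_conjTranspose_self H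
    have hRpsd : (1 - Q).PosSemidef := by
      have hR : (1 - Q) = (1 - Q)ᴴ * (1 - Q) := by
        have h1 : (1 - Q)ᴴ = 1 - Q := by
          rw [Matrix.conjTranspose_sub, Matrix.conjTranspose_one, hQherm]
        rw [h1, Matrix.sub_mul, Matrix.mul_sub, Matrix.mul_sub, hQidem]
        simp only [Matrix.one_mul, Matrix.mul_one]
        abel
      rw [hR]
      exact Matrix.posSemidef_conjTranspose_mul_self _
    have hQ1 : (Q m m).re ≤ 1 := by
      have h := psd_diag_re_nonneg hRpsd m
      have : ((1 - Q) m m) = 1 - Q m m := by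
        simp [Matrix.sub_apply, Matrix.one_apply]
      rw [this] at h
      simp only [Complex.sub_re, Complex.one_re] at h
      linarith
    have hQmm : (Q m m).re = ∑ i, D m i := by
      have h : Q m m = ∑ i, (Complex.normSq (H m i) : ℂ) := by
        rw [hQ, Matrix.mul_apply]
        exact Finset.sum_congr rfl fun i _ => by
          rw [Matrix.conjTranspose_apply, mul_star_self_eq_normSq]
      have h2 : (Q m m).re = ∑ i, Complex.normSq (H m i) := by
        rw [h]; push_cast; simp
      rw [h2]
      apply Finset.sum_congr rfl
      intro i _
      have hHmi : H m i = G m i * c i := by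
        rw [hH, Matrix.mul_apply]
        simp [Matrix.diagonal_apply, Finset.sum_ite_eq, Finset.mem_univ]
      rw [hHmi, Complex.normSq_mul, hD, hc]; dsimp only
      by_cases hi : ν i = 0
      · simp [hi]
      · have hνpos : 0 < ν i := lt_of_le_of_ne (hν0 i) (Ne.symm hi)
        rw [if_neg hi, if_neg hi, Complex.normSq_ofReal, div_eq_mul_inv]
        congr 1
        rw [← mul_inv, Real.mul_self_sqrt (hν0 i)]
    rw [← hQmm]; exact hQ1
  -- Jensen step
  have hjen : ∀ m, xlogb (∑ i, Complex.normSq (G m i)) ≤ ∑ i, D m i * xlogb (ν i) := by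
    intro m
    rw [hd m]
    exact jensen_slack (D m) ν (hD0 m) hν0 (hrow m)
  calc ∑ m, xlogb (∑ i, Complex.normSq (G m i)) ≤ ∑ m, ∑ i, D m i * xlogb (ν i) :=
        Finset.sum_le_sum fun m _ => hjen m
    _ = ∑ i, (∑ m, D m i) * xlogb (ν i) := by
        rw [Finset.sum_comm]
        exact Finset.sum_congr rfl fun i _ => by rw [Finset.sum_mul]
    _ = ∑ i, xlogb (ν i) := by
        apply Finset.sum_congr rfl
        intro i _
        by_cases hi : ν i = 0
        · simp [hi, xlogb_zero]
        · rw [hcol i hi, one_mul]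
/-- The entropy of `A Aᴴ` is at most the `xlogb`-entropy of the column norms of `A`. -/
lemma specMix {α M : Type*} [Fintype α] [DecidableEq α] [Fintype M] [DecidableEq M]
    (A : Matrix α M ℂ) :
    vnEntropy (A * Aᴴ) ≤ -∑ m, xlogb (∑ x, Complex.normSq (A x m)) := by
  have hσ : (A * Aᴴ).IsHermitian := Matrix.isHermitian_mul_conjTranspose_self A
  set U : Matrix α α ℂ := (hσ.eigenvectorUnitary : Matrix α α ℂ) with hU
  set ν : α → ℝ := hσ.eigenvalues with hν
  set G : Matrix M α ℂ := Aᴴ * U with hGdef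
  have hGG : Gᴴ * G = Matrix.diagonal (fun i => (ν i : ℂ)) := by
    have h := hσ.conjStarAlgAut_star_eigenvectorUnitary; rw [Unitary.conjStarAlgAut_star_apply] at h
    have h2 : Gᴴ = Uᴴ * A := by
      rw [hGdef, Matrix.conjTranspose_mul, Matrix.conjTranspose_conjTranspose]
    rw [h2, hGdef]
    calc Uᴴ * A * (Aᴴ * U) = Uᴴ * (A * Aᴴ) * U := by simp only [Matrix.mul_assoc]
      _ = Matrix.diagonal (fun i => (ν i : ℂ)) := by
          rw [← Matrix.star_eq_conjTranspose, h]
          rfl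
  have hGGH : G * Gᴴ = Aᴴ * A := by
    have h2 : Gᴴ = Uᴴ * A := by
      rw [hGdef, Matrix.conjTranspose_mul, Matrix.conjTranspose_conjTranspose]
    have hUU : U * Uᴴ = 1 := by
      rw [← Matrix.star_eq_conjTranspose]
      exact (Matrix.mem_unitaryGroup_iff).mp (hσ.eigenvectorUnitary).2
    rw [hGdef, h2]
    calc Aᴴ * U * (Uᴴ * A) = Aᴴ * (U * Uᴴ) * A := by simp only [Matrix.mul_assoc]
      _ = Aᴴ * A := by rw [hUU, Matrix.mul_one]
  have hcol : ∀ m, ∑ i, Complex.normSq (G m i) = ∑ x, Complex.normSq (A x m) := by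
    intro m
    have h1 : ((G * Gᴴ) m m) = ∑ i, (Complex.normSq (G m i) : ℂ) := by
      rw [Matrix.mul_apply]
      exact Finset.sum_congr rfl fun i _ => by
        rw [Matrix.conjTranspose_apply, mul_star_self_eq_normSq]
    have h2 : ((Aᴴ * A) m m) = ∑ x, (Complex.normSq (A x m) : ℂ) := by
      rw [Matrix.mul_apply]
      exact Finset.sum_congr rfl fun x _ => by
        rw [Matrix.conjTranspose_apply, star_mul_self_eq_normSq]
    have := h1.symm.trans ((congrFun (congrFun hGGH m) m).trans h2)
    exact_mod_cast this
  have hmain := specMix' G ν hGG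
  rw [vnEntropy, dif_pos hσ]
  have : ∑ i, hσ.eigenvalues i * Real.logb 2 (hσ.eigenvalues i) = ∑ i, xlogb (ν i) := rfl
  rw [this, neg_le_neg_iff]
  calc ∑ m, xlogb (∑ x, Complex.normSq (A x m))
      = ∑ m, xlogb (∑ i, Complex.normSq (G m i)) := by
        exact Finset.sum_congr rfl fun m _ => by rw [hcol m]
    _ ≤ ∑ i, xlogb (ν i) := hmain

/-- A Hermitian idempotent of trace one is a rank-one outer product. -/
lemma exists_rankOne {β : Type*} [Fintype β] [DecidableEq β] (Q : Matrix β β ℂ)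
    (hQ : Q.IsHermitian) (hidem : Q * Q = Q) (htr : Q.trace = 1) :
    ∃ v : β → ℂ, ∀ i j, Q i j = v i * star (v j) := by
  set W : Matrix β β ℂ := (hQ.eigenvectorUnitary : Matrix β β ℂ) with hW
  set μ : β → ℝ := hQ.eigenvalues with hμ
  have hWW : W * Wᴴ = 1 := by
    rw [← Matrix.star_eq_conjTranspose]
    exact (Matrix.mem_unitaryGroup_iff).mp (hQ.eigenvectorUnitary).2
  have hWW' : Wᴴ * W = 1 := by
    rw [← Matrix.star_eq_conjTranspose]
    exact (Matrix.mem_unitaryGroup_iff').mp (hQ.eigenvectorUnitary).2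
  have hdiag : Wᴴ * Q * W = Matrix.diagonal (fun i => (μ i : ℂ)) := by
    rw [← Matrix.star_eq_conjTranspose]
    have h := hQ.conjStarAlgAut_star_eigenvectorUnitary; rw [Unitary.conjStarAlgAut_star_apply] at h; exact h
  have hD2 : ∀ i, (μ i : ℂ) * (μ i : ℂ) = (μ i : ℂ) := by
    have h : Matrix.diagonal (fun i => (μ i : ℂ)) * Matrix.diagonal (fun i => (μ i : ℂ))
        = Matrix.diagonal (fun i => (μ i : ℂ)) := by
      rw [← hdiag]
      calc Wᴴ * Q * W * (Wᴴ * Q * W) = Wᴴ * Q * (W * Wᴴ) * Q * W := by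
            simp only [Matrix.mul_assoc]
        _ = Wᴴ * (Q * Q) * W := by
            rw [hWW, Matrix.mul_one]; simp only [Matrix.mul_assoc]
        _ = Wᴴ * Q * W := by rw [hidem]
    intro i
    have := congrFun (congrFun (h.symm) i) i
    rw [Matrix.diagonal_mul_diagonal] at this
    simpa using this.symm
  have hμ01 : ∀ i, μ i = 0 ∨ μ i = 1 := by
    intro i
    have h : (μ i) * (μ i) = μ i := by exact_mod_cast hD2 i
    have h2 : μ i * (μ i - 1) = 0 := by nlinarith
    rcases mul_eq_zero.mp h2 with h1 | h1
    · exact Or.inl h1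
    · exact Or.inr (by linarith)
  have htrμ : ∑ i, μ i = 1 := by
    have hsp := hQ.spectral_theorem; rw [Unitary.conjStarAlgAut_apply] at hsp
    have h1 : Q.trace = ∑ i, (μ i : ℂ) := by
      calc Q.trace = ((hQ.eigenvectorUnitary : Matrix β β ℂ) *
            Matrix.diagonal (RCLike.ofReal ∘ hQ.eigenvalues) *
            (star (hQ.eigenvectorUnitary : Matrix β β ℂ))).trace := by rw [← hsp]
        _ = ((star (hQ.eigenvectorUnitary : Matrix β β ℂ)) *
              ((hQ.eigenvectorUnitary : Matrix β β ℂ) *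
              Matrix.diagonal (RCLike.ofReal ∘ hQ.eigenvalues))).trace := by
            rw [Matrix.trace_mul_comm]
        _ = (Matrix.diagonal (RCLike.ofReal ∘ hQ.eigenvalues)).trace := by
            have hWW2 : star (hQ.eigenvectorUnitary : Matrix β β ℂ) *
                (hQ.eigenvectorUnitary : Matrix β β ℂ) = 1 := by
              rw [Matrix.star_eq_conjTranspose]; exact hWW'
            rw [← Matrix.mul_assoc, hWW2, Matrix.one_mul]
        _ = ∑ i, (μ i : ℂ) := by rw [Matrix.trace_diagonal]; rfl
    rw [htr] at h1
    exact_mod_cast h1.symm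
  obtain ⟨i₀, hi₀⟩ : ∃ i₀, μ i₀ = 1 := by
    by_contra hcon
    push_neg at hcon
    have : ∀ i, μ i = 0 := fun i => (hμ01 i).resolve_right (hcon i)
    rw [Finset.sum_congr rfl (fun i _ => this i)] at htrμ
    simp at htrμ
  have hrest : ∀ j, j ≠ i₀ → μ j = 0 := by
    intro j hj
    have hsum0 : ∑ i ∈ Finset.univ.erase i₀, μ i = 0 := by
      have := Finset.add_sum_erase Finset.univ μ (Finset.mem_univ i₀)
      rw [← this, hi₀] at htrμ
      linarith
    have hnn : ∀ i ∈ Finset.univ.erase i₀, 0 ≤ μ i := by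
      intro i _
      rcases hμ01 i with h | h <;> simp [h]
    exact (Finset.sum_eq_zero_iff_of_nonneg hnn).mp hsum0 j
      (Finset.mem_erase.mpr ⟨hj, Finset.mem_univ j⟩)
  refine ⟨fun i => W i i₀, fun i j => ?_⟩
  have hsp := hQ.spectral_theorem; rw [Unitary.conjStarAlgAut_apply] at hsp
  have hf : (RCLike.ofReal ∘ hQ.eigenvalues : β → ℂ) = fun z => if z = i₀ then 1 else 0 := by
    funext z
    have hi₀' : hQ.eigenvalues i₀ = 1 := hi₀
    by_cases hz : z = i₀
    · simp [hz, Function.comp, hi₀']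
    · have h0 : hQ.eigenvalues z = 0 := hrest z hz
      simp [Function.comp, h0, hz]
  rw [hsp, hf]
  rw [Matrix.mul_apply]
  have hterm : ∀ z, ((hQ.eigenvectorUnitary : Matrix β β ℂ) *
      Matrix.diagonal (fun z => if z = i₀ then (1:ℂ) else 0)) i z *
      (star (hQ.eigenvectorUnitary : Matrix β β ℂ)) z j
      = if z = i₀ then W i i₀ * star (W j i₀) else 0 := by
    intro z
    rw [Matrix.mul_apply]
    by_cases hz : z = i₀
    · subst hz
      rw [Finset.sum_eq_single z]
      · simp [Matrix.diagonal_apply, Matrix.star_eq_conjTranspose, Matrix.conjTranspose_apply, hW]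
      · intro w _ hw
        simp [Matrix.diagonal_apply, hw]
      · intro h; exact absurd (Finset.mem_univ z) h
    · rw [Finset.sum_eq_zero, if_neg hz, zero_mul]
      intro w _
      by_cases hwz : w = z
      · subst hwz; simp [Matrix.diagonal_apply, hz]
      · simp [Matrix.diagonal_apply, hwz]
  rw [Finset.sum_congr rfl (fun z _ => hterm z)]
  simp
lemma ptraceB_form (Q : Matrix b b ℂ) (hidem : Q * Q = Q) (ρ : Matrix (a × b) (a × b) ℂ)
    (x y : a) :
    ptraceB (((1 : Matrix a a ℂ) ⊗ₖ Q) * ρ * ((1 : Matrix a a ℂ) ⊗ₖ Q)) x y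
      = ∑ i, ∑ i', ρ (x, i) (y, i') * Q i' i := by
  show ∑ j, (((1 : Matrix a a ℂ) ⊗ₖ Q) * ρ * ((1 : Matrix a a ℂ) ⊗ₖ Q)) (x,j) (y,j) = _
  have hentry : ∀ j, (((1 : Matrix a a ℂ) ⊗ₖ Q) * ρ * ((1 : Matrix a a ℂ) ⊗ₖ Q)) (x,j) (y,j)
      = ∑ i, ∑ i', Q j i * ρ (x,i) (y,i') * Q i' j := by
    intro j
    rw [Matrix.mul_apply]
    have h1 : ∀ z : a × b, (((1 : Matrix a a ℂ) ⊗ₖ Q) * ρ) (x,j) z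
        = ∑ i, Q j i * ρ (x,i) z := by
      intro z
      rw [Matrix.mul_apply, Fintype.sum_prod_type]
      simp [Matrix.kroneckerMap_apply, Matrix.one_apply, ite_mul, zero_mul,
        Finset.sum_ite_eq, Finset.mem_univ]
    calc ∑ z : a × b, (((1 : Matrix a a ℂ) ⊗ₖ Q) * ρ) (x,j) z *
          ((1 : Matrix a a ℂ) ⊗ₖ Q) z (y,j)
        = ∑ z : a × b, (∑ i, Q j i * ρ (x,i) z) * ((1 : Matrix a a ℂ) ⊗ₖ Q) z (y,j) := by
          exact Finset.sum_congr rfl fun z _ => by rw [h1]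
      _ = ∑ i', (∑ i, Q j i * ρ (x,i) (y,i')) * Q i' j := by
          rw [Fintype.sum_prod_type]
          simp [Matrix.kroneckerMap_apply, Matrix.one_apply, ite_mul, zero_mul, mul_ite, mul_zero,
            Finset.sum_ite_eq, Finset.mem_univ]
      _ = ∑ i, ∑ i', Q j i * ρ (x,i) (y,i') * Q i' j := by
          rw [Finset.sum_comm]
          exact Finset.sum_congr rfl fun i _ => by rw [Finset.sum_mul]
  rw [Finset.sum_congr rfl (fun j _ => hentry j)]
  rw [Finset.sum_comm]
  apply Finset.sum_congr rfl
  intro i _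
  rw [Finset.sum_comm]
  apply Finset.sum_congr rfl
  intro i' _
  have : ∑ j, Q j i * ρ (x,i) (y,i') * Q i' j = ρ (x,i) (y,i') * ∑ j, Q i' j * Q j i := by
    rw [Finset.mul_sum]
    exact Finset.sum_congr rfl fun j _ => by ring
  rw [this, ← Matrix.mul_apply, hidem]

lemma parseval {v : b → b → ℂ}
    (hv : ∀ i j, ∑ k, v k i * star (v k j) = if i = j then (1:ℂ) else 0) (z : b → ℂ) :
    ∑ k, Complex.normSq (∑ i, star (v k i) * z i) = ∑ i, Complex.normSq (z i) := by
  have hC : ∑ k, ((Complex.normSq (∑ i, star (v k i) * z i) : ℝ) : ℂ)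
      = ∑ i, ((Complex.normSq (z i) : ℝ) : ℂ) := by
    calc ∑ k, ((Complex.normSq (∑ i, star (v k i) * z i) : ℝ) : ℂ)
        = ∑ k, (∑ i, star (v k i) * z i) * star (∑ j, star (v k j) * z j) := by
          exact Finset.sum_congr rfl fun k _ => (mul_star_self_eq_normSq _).symm
      _ = ∑ k, ∑ i, ∑ j, star (v k i) * z i * (v k j * star (z j)) := by
          apply Finset.sum_congr rfl
          intro k _
          rw [star_sum, Finset.sum_mul]
          apply Finset.sum_congr rfl
          intro i _
          rw [Finset.mul_sum]
          apply Finset.sum_congr rfl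
          intro j _
          simp [mul_comm, mul_assoc, mul_left_comm]
      _ = ∑ i, ∑ j, (z i * star (z j)) * ∑ k, v k j * star (v k i) := by
          rw [Finset.sum_comm]
          apply Finset.sum_congr rfl
          intro i _
          rw [Finset.sum_comm]
          apply Finset.sum_congr rfl
          intro j _
          rw [Finset.mul_sum]
          apply Finset.sum_congr rfl
          intro k _
          ring
      _ = ∑ i, (z i * star (z i)) := by
          apply Finset.sum_congr rfl
          intro i _
          rw [Finset.sum_eq_single i]
          · rw [hv i i, if_pos rfl, mul_one]
          · intro j _ hj
            rw [hv j i, if_neg hj, mul_zero]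
          · intro h; exact absurd (Finset.mem_univ i) h
      _ = ∑ i, ((Complex.normSq (z i) : ℝ) : ℂ) := by
          exact Finset.sum_congr rfl fun i _ => mul_star_self_eq_normSq _
  exact_mod_cast hC
/-- The average post-measurement entropy of A is at most the global entropy. -/
theorem stmt4 (ρ : Matrix (a × b) (a × b) ℂ) (hρ : IsDensity ρ)
    (P : b → Matrix b b ℂ) (hP : IsRankOneMeas P) :
    ∑ k, probOf P ρ k * vnEntropy (condA P ρ k) ≤ vnEntropy ρ := by
  obtain ⟨⟨hPherm, hPorth, hPsum⟩, hPtr⟩ := hP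
  obtain ⟨hPSD, htrρ⟩ := hρ
  have hherm : ρ.IsHermitian := hPSD.1
  have hidem : ∀ k, P k * P k = P k := fun k => by simpa using hPorth k k
  choose v hv using fun k => exists_rankOne (P k) (hPherm k) (hidem k) (hPtr k)
  have hvsum : ∀ i j, ∑ k, v k i * star (v k j) = if i = j then (1:ℂ) else 0 := by
    intro i j
    have h := congrFun (congrFun hPsum i) j
    rw [Matrix.sum_apply] at h
    calc ∑ k, v k i * star (v k j) = ∑ k, P k i j :=
          Finset.sum_congr rfl fun k _ => (hv k i j).symm
      _ = (1 : Matrix b b ℂ) i j := h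
      _ = if i = j then 1 else 0 := Matrix.one_apply
  set U : Matrix (a×b) (a×b) ℂ := (hherm.eigenvectorUnitary : Matrix (a×b) (a×b) ℂ) with hU
  set lam : (a×b) → ℝ := hherm.eigenvalues with hlamdef
  have hlam0 : ∀ m, 0 ≤ lam m := fun m => hPSD.eigenvalues_nonneg m
  -- entrywise spectral decomposition
  have hρe : ∀ z z', ρ z z' = ∑ m, (lam m : ℂ) * (U z m * star (U z' m)) := by
    intro z z'
    have hsp := hherm.spectral_theorem; rw [Unitary.conjStarAlgAut_apply] at hsp
    have h0 := congrFun (congrFun hsp z) z'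
    rw [h0, Matrix.mul_apply]
    apply Finset.sum_congr rfl
    intro m _
    rw [Matrix.mul_diagonal, Matrix.star_eq_conjTranspose, Matrix.conjTranspose_apply]
    show U z m * ((lam m : ℝ) : ℂ) * star (U z' m) = _
    ring
  -- sum of eigenvalues is one
  have hslam : ∑ m, lam m = 1 := by
    have hsp := hherm.spectral_theorem; rw [Unitary.conjStarAlgAut_apply] at hsp
    have h1 : ρ.trace = ∑ m, (lam m : ℂ) := by
      calc ρ.trace = ((hherm.eigenvectorUnitary : Matrix (a×b) (a×b) ℂ) *
            Matrix.diagonal (RCLike.ofReal ∘ hherm.eigenvalues) *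
            (star (hherm.eigenvectorUnitary : Matrix (a×b) (a×b) ℂ))).trace := by rw [← hsp]
        _ = ((star (hherm.eigenvectorUnitary : Matrix (a×b) (a×b) ℂ)) *
              ((hherm.eigenvectorUnitary : Matrix (a×b) (a×b) ℂ) *
              Matrix.diagonal (RCLike.ofReal ∘ hherm.eigenvalues))).trace := by
            rw [Matrix.trace_mul_comm]
        _ = (Matrix.diagonal (RCLike.ofReal ∘ hherm.eigenvalues)).trace := by
            have hWW2 : star (hherm.eigenvectorUnitary : Matrix (a×b) (a×b) ℂ) *
                (hherm.eigenvectorUnitary : Matrix (a×b) (a×b) ℂ) = 1 :=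
              (Matrix.mem_unitaryGroup_iff').mp (hherm.eigenvectorUnitary).2
            rw [← Matrix.mul_assoc, hWW2, Matrix.one_mul]
        _ = ∑ m, (lam m : ℂ) := by rw [Matrix.trace_diagonal]; rfl
    rw [htrρ] at h1
    exact_mod_cast h1.symm
  -- column norms of U are one
  have hUcol : ∀ m, ∑ z, Complex.normSq (U z m) = 1 := by
    intro m
    have hWW2 : star (hherm.eigenvectorUnitary : Matrix (a×b) (a×b) ℂ) *
        (hherm.eigenvectorUnitary : Matrix (a×b) (a×b) ℂ) = 1 :=
      (Matrix.mem_unitaryGroup_iff').mp (hherm.eigenvectorUnitary).2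
    have h := congrFun (congrFun hWW2 m) m
    rw [Matrix.mul_apply, Matrix.one_apply_eq] at h
    have h2 : ∑ z, ((Complex.normSq (U z m) : ℝ) : ℂ) = 1 := by
      rw [← h]
      exact Finset.sum_congr rfl fun z _ => (star_mul_self_eq_normSq (U z m)).symm
    exact_mod_cast h2
  -- main objects
  set s : b → (a×b) → a → ℂ := fun k m x => ∑ i, star (v k i) * U (x,i) m with hs
  set r : b → (a×b) → ℝ := fun k m => lam m * ∑ x, Complex.normSq (s k m x) with hrdef
  set c : b → Matrix a (a×b) ℂ :=
    fun k => Matrix.of fun x m => ((Real.sqrt (lam m) : ℝ) : ℂ) * s k m x with hc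
  have hr0 : ∀ k m, 0 ≤ r k m := fun k m =>
    mul_nonneg (hlam0 m) (Finset.sum_nonneg fun x _ => Complex.normSq_nonneg _)
  have hcnorm : ∀ k m, ∑ x, Complex.normSq ((c k) x m) = r k m := by
    intro k m
    rw [hrdef]; dsimp only
    rw [Finset.mul_sum]
    apply Finset.sum_congr rfl
    intro x _
    rw [hc]; dsimp only [Matrix.of_apply]
    rw [Complex.normSq_mul, Complex.normSq_ofReal, Real.mul_self_sqrt (hlam0 m)]
  have hcentry : ∀ k x y, ((c k) * (c k)ᴴ) x y = ∑ m, (lam m : ℂ) * (s k m x * star (s k m y)) := by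
    intro k x y
    rw [Matrix.mul_apply]
    apply Finset.sum_congr rfl
    intro m _
    rw [Matrix.conjTranspose_apply, hc]; dsimp only [Matrix.of_apply]
    rw [star_mul']
    rw [Complex.star_def, Complex.conj_ofReal]
    have : (((Real.sqrt (lam m) : ℝ) : ℂ)) * (((Real.sqrt (lam m) : ℝ) : ℂ)) = ((lam m : ℝ) : ℂ) := by
      rw [← Complex.ofReal_mul, Real.mul_self_sqrt (hlam0 m)]
    calc ((Real.sqrt (lam m) : ℝ) : ℂ) * s k m x * (((Real.sqrt (lam m) : ℝ) : ℂ) * star (s k m y))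
        = (((Real.sqrt (lam m) : ℝ) : ℂ) * ((Real.sqrt (lam m) : ℝ) : ℂ)) *
            (s k m x * star (s k m y)) := by ring
      _ = (lam m : ℂ) * (s k m x * star (s k m y)) := by rw [this]
  -- the conditional unnormalized state is c k * (c k)ᴴ
  have hMk : ∀ k, ptraceB (((1 : Matrix a a ℂ) ⊗ₖ P k) * ρ * ((1 : Matrix a a ℂ) ⊗ₖ P k))
      = (c k) * (c k)ᴴ := by
    intro k
    ext x y
    rw [ptraceB_form (P k) (hidem k), hcentry k x y]
    have hstar : ∀ m, star (s k m y) = ∑ i', v k i' * star (U (y,i') m) := by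
      intro m
      rw [hs]; dsimp only
      rw [star_sum]
      apply Finset.sum_congr rfl
      intro i' _
      rw [star_mul', star_star]
    calc ∑ i, ∑ i', ρ (x, i) (y, i') * P k i' i
        = ∑ i, ∑ i', ∑ m, ((lam m : ℂ) * (U (x,i) m * star (U (y,i') m))) *
            (v k i' * star (v k i)) := by
          apply Finset.sum_congr rfl; intro i _
          apply Finset.sum_congr rfl; intro i' _
          rw [hρe (x,i) (y,i'), hv k i' i, Finset.sum_mul]
      _ = ∑ i, ∑ m, ∑ i', ((lam m : ℂ) * (U (x,i) m * star (U (y,i') m))) *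
            (v k i' * star (v k i)) := by
          apply Finset.sum_congr rfl; intro i _
          exact Finset.sum_comm
      _ = ∑ m, ∑ i, ∑ i', ((lam m : ℂ) * (U (x,i) m * star (U (y,i') m))) *
            (v k i' * star (v k i)) := Finset.sum_comm
      _ = ∑ m, (lam m : ℂ) * (s k m x * star (s k m y)) := by
          apply Finset.sum_congr rfl; intro m _
          rw [hstar m, hs]; dsimp only
          rw [Finset.sum_mul_sum]
          rw [Finset.mul_sum]
          apply Finset.sum_congr rfl; intro i _
          rw [Finset.mul_sum]
          apply Finset.sum_congr rfl; intro i' _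
          ring
  -- the trace is the sum of r
  have htk : ∀ k, (((1 : Matrix a a ℂ) ⊗ₖ P k) * ρ).trace = ((∑ m, r k m : ℝ) : ℂ) := by
    intro k
    have hEE : ((1 : Matrix a a ℂ) ⊗ₖ P k) * ((1 : Matrix a a ℂ) ⊗ₖ P k)
        = (1 : Matrix a a ℂ) ⊗ₖ P k := by
      rw [← Matrix.mul_kronecker_mul, Matrix.one_mul, hidem k]
    have h1 : (((1 : Matrix a a ℂ) ⊗ₖ P k) * ρ * ((1 : Matrix a a ℂ) ⊗ₖ P k)).trace
        = (((1 : Matrix a a ℂ) ⊗ₖ P k) * ρ).trace := by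
      rw [Matrix.trace_mul_comm, ← Matrix.mul_assoc, hEE]
    rw [← h1]
    have h2 : (((1 : Matrix a a ℂ) ⊗ₖ P k) * ρ * ((1 : Matrix a a ℂ) ⊗ₖ P k)).trace
        = ∑ x, ((c k) * (c k)ᴴ) x x := by
      rw [Matrix.trace]
      rw [Fintype.sum_prod_type]
      apply Finset.sum_congr rfl
      intro x _
      rw [← hMk k]
      rfl
    rw [h2]
    have h3 : ∀ x, ((c k) * (c k)ᴴ) x x = ∑ m, ((Complex.normSq ((c k) x m) : ℝ) : ℂ) := by
      intro x
      rw [Matrix.mul_apply]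
      apply Finset.sum_congr rfl
      intro m _
      rw [Matrix.conjTranspose_apply, mul_star_self_eq_normSq]
    rw [Finset.sum_congr rfl (fun x _ => h3 x), Finset.sum_comm]
    push_cast
    apply Finset.sum_congr rfl
    intro m _
    rw [← hcnorm k m]
    push_cast
    rfl
  set p : b → ℝ := fun k => ∑ m, r k m with hp
  have hprob : ∀ k, probOf P ρ k = p k := by
    intro k
    show ((((1 : Matrix a a ℂ) ⊗ₖ P k) * ρ).trace).re = p k
    rw [htk k, Complex.ofReal_re]
  have hp0 : ∀ k, 0 ≤ p k := fun k => Finset.sum_nonneg fun m _ => hr0 k m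
  -- column sums of r give the eigenvalues
  have hrk : ∀ m, ∑ k, r k m = lam m := by
    intro m
    have h : ∑ k, r k m = lam m * ∑ k, ∑ x, Complex.normSq (s k m x) := by
      rw [Finset.mul_sum]
    rw [h]
    have h2 : ∑ k, ∑ x, Complex.normSq (s k m x) = ∑ x, ∑ k, Complex.normSq (s k m x) :=
      Finset.sum_comm
    rw [h2]
    have h3 : ∀ x : a, ∑ k, Complex.normSq (s k m x) = ∑ i, Complex.normSq (U (x,i) m) :=
      fun x => parseval hvsum (fun i => U (x,i) m)
    rw [Finset.sum_congr rfl (fun x _ => h3 x)]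
    have h4 : ∑ x : a, ∑ i : b, Complex.normSq (U (x,i) m) = ∑ z : a × b, Complex.normSq (U z m) :=
      (Fintype.sum_prod_type (f := fun z : a × b => Complex.normSq (U z m))).symm
    rw [h4, hUcol m, mul_one]
  -- total sum is one
  have htot : ∑ k, ∑ m, r k m = 1 := by
    rw [Finset.sum_comm, Finset.sum_congr rfl (fun m (_ : m ∈ Finset.univ) => hrk m), hslam]
  -- the per-outcome bound
  have hbound : ∀ k, probOf P ρ k * vnEntropy (condA P ρ k)
      ≤ xlogb (p k) - ∑ m, xlogb (r k m) := by
    intro k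
    rcases eq_or_lt_of_le (hp0 k) with hpk0 | hpk
    · -- zero-probability outcome
      have hr00 : ∀ m, r k m = 0 := by
        intro m
        have := (Finset.sum_eq_zero_iff_of_nonneg (fun m _ => hr0 k m)).mp hpk0.symm
        exact this m (Finset.mem_univ m)
      rw [hprob k, ← hpk0, zero_mul]
      have hz : ∑ m, xlogb (r k m) = 0 :=
        Finset.sum_eq_zero fun m _ => by rw [hr00 m, xlogb_zero]
      rw [hz, xlogb_zero]
      norm_num
    · -- positive-probability outcome
      set t : ℂ := (((Real.sqrt (p k))⁻¹ : ℝ) : ℂ) with ht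
      set Ak : Matrix a (a×b) ℂ := t • c k with hAk
      have hps : Real.sqrt (p k) ≠ 0 := by positivity
      have htt : t * t = ((p k)⁻¹ : ℝ) := by
        rw [ht, ← Complex.ofReal_mul, ← mul_inv, Real.mul_self_sqrt (hp0 k)]
      have hcond : condA P ρ k = Ak * Akᴴ := by
        unfold condA
        rw [htk k, hMk k]
        rw [hAk, Matrix.conjTranspose_smul, Matrix.smul_mul, Matrix.mul_smul, smul_smul]
        have hstart : star t = t := by rw [ht, Complex.star_def, Complex.conj_ofReal]
        rw [hstart, htt, ← Complex.ofReal_inv]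
      have hAcol : ∀ m, ∑ x, Complex.normSq (Ak x m) = r k m / p k := by
        intro m
        have h1 : ∀ x, Complex.normSq (Ak x m) = (p k)⁻¹ * Complex.normSq ((c k) x m) := by
          intro x
          rw [hAk, Matrix.smul_apply, smul_eq_mul, Complex.normSq_mul, ht, Complex.normSq_ofReal,
            ← mul_inv, Real.mul_self_sqrt (hp0 k)]
        rw [Finset.sum_congr rfl (fun x _ => h1 x), ← Finset.mul_sum, hcnorm k m,
          div_eq_inv_mul]
      have hvn : vnEntropy (condA P ρ k) ≤ -∑ m, xlogb (r k m / p k) := by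
        rw [hcond]
        calc vnEntropy (Ak * Akᴴ) ≤ -∑ m, xlogb (∑ x, Complex.normSq (Ak x m)) := specMix Ak
          _ = -∑ m, xlogb (r k m / p k) := by
              rw [Finset.sum_congr rfl (fun m (_ : m ∈ Finset.univ) => by rw [hAcol m])]
      have hterm : ∀ m, p k * xlogb (r k m / p k)
          = xlogb (r k m) - r k m * Real.logb 2 (p k) := by
        intro m
        rcases eq_or_lt_of_le (hr0 k m) with h0 | h0
        · rw [← h0]
          simp [xlogb_zero, xlogb]
        · rw [xlogb, xlogb, Real.logb_div (ne_of_gt h0) (ne_of_gt hpk)]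
          field_simp
      calc probOf P ρ k * vnEntropy (condA P ρ k)
          = p k * vnEntropy (condA P ρ k) := by rw [hprob]
        _ ≤ p k * (-∑ m, xlogb (r k m / p k)) := mul_le_mul_of_nonneg_left hvn (hp0 k)
        _ = -∑ m, p k * xlogb (r k m / p k) := by rw [mul_neg, Finset.mul_sum]
        _ = -∑ m, (xlogb (r k m) - r k m * Real.logb 2 (p k)) := by
            rw [Finset.sum_congr rfl (fun m (_ : m ∈ Finset.univ) => hterm m)]
        _ = xlogb (p k) - ∑ m, xlogb (r k m) := by
            rw [Finset.sum_sub_distrib, ← Finset.sum_mul]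
            have : (∑ m, r k m) = p k := rfl
            rw [this]
            rw [neg_sub]
            rfl
  -- final assembly
  have hfinal : ∑ k, (xlogb (p k) - ∑ m, xlogb (r k m)) ≤ -∑ m, xlogb (lam m) := by
    have hsub := subadd r hr0 htot
    have h1 : ∑ m, xlogb (∑ k, r k m) = ∑ m, xlogb (lam m) :=
      Finset.sum_congr rfl fun m _ => by rw [hrk m]
    rw [h1] at hsub
    rw [Finset.sum_sub_distrib]
    have h2 : ∑ k, xlogb (∑ m, r k m) = ∑ k, xlogb (p k) := rfl
    rw [h2] at hsub
    linarith
  have hvnρ : vnEntropy ρ = -∑ m, xlogb (lam m) := by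
    rw [vnEntropy, dif_pos hherm]
    rfl
  calc ∑ k, probOf P ρ k * vnEntropy (condA P ρ k)
      ≤ ∑ k, (xlogb (p k) - ∑ m, xlogb (r k m)) := Finset.sum_le_sum fun k _ => hbound k
    _ ≤ -∑ m, xlogb (lam m) := hfinal
    _ = vnEntropy ρ := hvnρ.symm

end
end

section
/- For any bipartite pure state |ψ⟩^{AB} and any rank-one projective measurement {Π_k^B} on B leaving ρ^B invariant, S(|ψ⟩⟨ψ| || ρ̃^{AB}) = S(ρ^B); hence the relative entropy of nonlocality of a pure state equals the entropy of the measured subsystem. -/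
open scoped Kronecker Classical ComplexOrder
open Matrix

noncomputable section

variable {n : Type*} [Fintype n] [DecidableEq n]

variable {a b : Type*} [Fintype a] [DecidableEq a] [Fintype b] [DecidableEq b]
variable {ι : Type*} [Fintype ι]

/-! ### Auxiliary lemmas -/

section AuxSpectral

variable {A : Matrix n n ℂ}

lemma aux_spectral_theorem (hA : A.IsHermitian) :
    A = (hA.eigenvectorUnitary : Matrix n n ℂ) * Matrix.diagonal (RCLike.ofReal ∘ hA.eigenvalues) *
      star (hA.eigenvectorUnitary : Matrix n n ℂ) :=
  hA.spectral_theorem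

lemma aux_star_mul_self_mul_eq_diagonal (hA : A.IsHermitian) :
    star (hA.eigenvectorUnitary : Matrix n n ℂ) * A * (hA.eigenvectorUnitary : Matrix n n ℂ) =
      Matrix.diagonal (RCLike.ofReal ∘ hA.eigenvalues) :=
  by simpa using hA.conjStarAlgAut_star_eigenvectorUnitary

lemma aux_Ustar (hA : A.IsHermitian) (X : Matrix n n ℂ) :
    (hA.eigenvectorUnitary : Matrix n n ℂ) *
      (star (hA.eigenvectorUnitary : Matrix n n ℂ) * X) = X := by
  rw [← Matrix.mul_assoc, Matrix.mem_unitaryGroup_iff.mp hA.eigenvectorUnitary.2,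
    Matrix.one_mul]

lemma aux_starU (hA : A.IsHermitian) (X : Matrix n n ℂ) :
    star (hA.eigenvectorUnitary : Matrix n n ℂ) *
      ((hA.eigenvectorUnitary : Matrix n n ℂ) * X) = X := by
  rw [← Matrix.mul_assoc, Matrix.mem_unitaryGroup_iff'.mp hA.eigenvectorUnitary.2,
    Matrix.one_mul]

lemma aux_conj_mul (hA : A.IsHermitian) (X Y : Matrix n n ℂ) :
    (star (hA.eigenvectorUnitary : Matrix n n ℂ) * X * (hA.eigenvectorUnitary : Matrix n n ℂ)) *
      (star (hA.eigenvectorUnitary : Matrix n n ℂ) * Y * (hA.eigenvectorUnitary : Matrix n n ℂ))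
    = star (hA.eigenvectorUnitary : Matrix n n ℂ) * (X * Y) *
        (hA.eigenvectorUnitary : Matrix n n ℂ) := by
  simp only [Matrix.mul_assoc]
  rw [aux_Ustar hA (Y * (hA.eigenvectorUnitary : Matrix n n ℂ))]

lemma aux_trace_conj (hA : A.IsHermitian) (X : Matrix n n ℂ) :
    ((hA.eigenvectorUnitary : Matrix n n ℂ) * X *
      star (hA.eigenvectorUnitary : Matrix n n ℂ)).trace = X.trace := by
  rw [Matrix.trace_mul_comm, ← Matrix.mul_assoc,
    Matrix.mem_unitaryGroup_iff'.mp hA.eigenvectorUnitary.2, Matrix.one_mul]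

/-- Idempotent Hermitian matrices have eigenvalues `0` or `1`. -/
lemma aux_eig_idem (hA : A.IsHermitian) (hidem : A * A = A) (i : n) :
    hA.eigenvalues i = 0 ∨ hA.eigenvalues i = 1 := by
  have key := aux_star_mul_self_mul_eq_diagonal hA
  have hDD := aux_conj_mul hA A A
  rw [hidem, key] at hDD
  have h2 := congrFun (congrFun hDD i) i
  simp only [Matrix.diagonal_mul_diagonal, Matrix.diagonal_apply_eq, Function.comp_apply] at h2
  have h3 : (hA.eigenvalues i) * (hA.eigenvalues i) = hA.eigenvalues i := by
    have h2' : ((hA.eigenvalues i : ℝ) : ℂ) * ((hA.eigenvalues i : ℝ) : ℂ)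
        = ((hA.eigenvalues i : ℝ) : ℂ) := h2
    exact_mod_cast h2'
  rcases mul_eq_zero.mp (by linear_combination h3 : (hA.eigenvalues i) *
      (hA.eigenvalues i - 1) = 0) with h | h
  · exact Or.inl h
  · exact Or.inr (by linarith [sub_eq_zero.mp h])

/-- `matLog` of an idempotent Hermitian matrix vanishes. -/
lemma aux_matLog_idem (hA : A.IsHermitian) (hidem : A * A = A) : matLog A = 0 := by
  rw [matLog, dif_pos hA]
  have h : (Matrix.diagonal fun i => (Real.logb 2 (hA.eigenvalues i) : ℂ)) = 0 := by
    have h' : (fun i => (Real.logb 2 (hA.eigenvalues i) : ℂ)) = fun _ => 0 := by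
      funext i
      rcases aux_eig_idem hA hidem i with h | h <;> simp [h]
    rw [h', Matrix.diagonal_zero]
  rw [h, Matrix.mul_zero, Matrix.zero_mul]

/-- The matrix log acts as `logb 2 r` on "eigen-matrices". -/
lemma aux_matLog_mul (hA : A.IsHermitian) (r : ℝ) (B : Matrix n n ℂ)
    (hAB : A * B = (r : ℂ) • B) :
    matLog A * B = ((Real.logb 2 r : ℝ) : ℂ) • B := by
  set U := (hA.eigenvectorUnitary : Matrix n n ℂ) with hU
  set C := star U * B with hC
  have key := aux_star_mul_self_mul_eq_diagonal hA
  have hDC : Matrix.diagonal (RCLike.ofReal ∘ hA.eigenvalues) * C = (r : ℂ) • C := by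
    rw [← key, hC, Matrix.mul_assoc (star U * A) U (star U * B)]
    rw [show U * (star U * B) = B from aux_Ustar hA B, Matrix.mul_assoc, hAB, Matrix.mul_smul]
  have hlog : Matrix.diagonal (fun i => (Real.logb 2 (hA.eigenvalues i) : ℂ)) * C =
      ((Real.logb 2 r : ℝ) : ℂ) • C := by
    ext i j
    have h2 : ((hA.eigenvalues i : ℝ) : ℂ) * C i j = (r : ℂ) * C i j := by
      have h2' := congrFun (congrFun hDC i) j
      simpa [Matrix.diagonal_mul] using h2'
    by_cases hc : C i j = 0
    · simp [Matrix.diagonal_mul, hc]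
    · have h4 : ((hA.eigenvalues i : ℝ) : ℂ) = (r : ℂ) := mul_right_cancel₀ hc h2
      have hev : hA.eigenvalues i = r := by exact_mod_cast h4
      simp [Matrix.diagonal_mul, Matrix.smul_apply, hev, smul_eq_mul]
  rw [matLog, dif_pos hA, ← hU, Matrix.mul_assoc U _ (star U), Matrix.mul_assoc U _ B,
    Matrix.mul_assoc _ (star U) B, ← hC, hlog, Matrix.mul_smul, hC, hU, aux_Ustar hA]

/-- Trace of a Hermitian matrix is the sum of its eigenvalues. -/
lemma aux_trace_eq (hA : A.IsHermitian) :
    A.trace = ∑ i, ((hA.eigenvalues i : ℝ) : ℂ) := by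
  nth_rewrite 1 [aux_spectral_theorem hA]
  rw [aux_trace_conj hA, Matrix.trace_diagonal]
  rfl

/-- `vnEntropy` via `matLog`. -/
lemma aux_vnEntropy_eq (hA : A.IsHermitian) :
    vnEntropy A = -((A * matLog A).trace).re := by
  have h : (A * matLog A).trace
      = ∑ i, (((hA.eigenvalues i * Real.logb 2 (hA.eigenvalues i) : ℝ)) : ℂ) := by
    rw [matLog, dif_pos hA]
    nth_rewrite 1 [aux_spectral_theorem hA]
    have hU : (hA.eigenvectorUnitary : Matrix n n ℂ) = (hA.eigenvectorUnitary : Matrix n n ℂ) := rfl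
    rw [show ((hA.eigenvectorUnitary : Matrix n n ℂ) * Matrix.diagonal (RCLike.ofReal ∘ hA.eigenvalues) * star (hA.eigenvectorUnitary : Matrix n n ℂ)) *
          ((hA.eigenvectorUnitary : Matrix n n ℂ) * Matrix.diagonal (fun i => (Real.logb 2 (hA.eigenvalues i) : ℂ)) * star (hA.eigenvectorUnitary : Matrix n n ℂ))
        = (hA.eigenvectorUnitary : Matrix n n ℂ) * (Matrix.diagonal (RCLike.ofReal ∘ hA.eigenvalues) *
            Matrix.diagonal (fun i => (Real.logb 2 (hA.eigenvalues i) : ℂ))) * star (hA.eigenvectorUnitary : Matrix n n ℂ) from by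
      simp only [Matrix.mul_assoc]
      rw [aux_starU hA]]
    rw [aux_trace_conj hA, Matrix.diagonal_mul_diagonal, Matrix.trace_diagonal]
    push_cast
    rfl
  rw [vnEntropy, dif_pos hA, h, Complex.re_sum]
  simp

end AuxSpectral

section AuxRankOne

lemma aux_vecMulVec_mulVec (u v w : n → ℂ) :
    Matrix.vecMulVec u v *ᵥ w = (v ⬝ᵥ w) • u := by
  funext i
  simp only [Matrix.mulVec, dotProduct, Matrix.vecMulVec_apply, Pi.smul_apply,
    smul_eq_mul, Finset.sum_mul]
  exact Finset.sum_congr rfl fun j _ => by ring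

lemma aux_trace_vecMulVec_mul (u v : n → ℂ) (X : Matrix n n ℂ) :
    (Matrix.vecMulVec u v * X).trace = v ⬝ᵥ (X *ᵥ u) := by
  simp only [Matrix.trace, Matrix.diag, Matrix.mul_apply, Matrix.vecMulVec_apply,
    Matrix.mulVec, dotProduct, Finset.mul_sum]
  rw [Finset.sum_comm]
  exact Finset.sum_congr rfl fun j _ => Finset.sum_congr rfl fun i _ => by ring

lemma aux_vecMulVec_herm (u : n → ℂ) : (Matrix.vecMulVec u (star u)).IsHermitian := by
  apply Matrix.ext
  intro i j
  simp only [Matrix.conjTranspose_apply, Matrix.vecMulVec_apply, Pi.star_apply, star_mul',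
    star_star]
  ring

lemma aux_rankOne_structure {P : Matrix n n ℂ} (hP : P.IsHermitian) (hidem : P * P = P)
    (htr : P.trace = 1) : ∃ u : n → ℂ, P = Matrix.vecMulVec u (star u) := by
  have he := aux_eig_idem hP hidem
  have henn : ∀ i, 0 ≤ hP.eigenvalues i := by
    intro i; rcases he i with h | h <;> rw [h] <;> norm_num
  have htr' : ∑ i, hP.eigenvalues i = 1 := by
    have h1 := aux_trace_eq hP
    rw [htr] at h1
    exact_mod_cast h1.symm
  obtain ⟨i0, hi0⟩ : ∃ i0, hP.eigenvalues i0 = 1 := by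
    by_contra hcon
    push_neg at hcon
    have hz : ∀ i, hP.eigenvalues i = 0 := fun i => (he i).resolve_right (hcon i)
    simp [hz] at htr'
  have hzero : ∀ j, j ≠ i0 → hP.eigenvalues j = 0 := by
    intro j hj
    by_contra hc
    have hj1 : hP.eigenvalues j = 1 := (he j).resolve_left hc
    have hmem : j ∈ Finset.univ.erase i0 := Finset.mem_erase.mpr ⟨hj, Finset.mem_univ j⟩
    have hle : hP.eigenvalues j ≤ ∑ i ∈ Finset.univ.erase i0, hP.eigenvalues i :=
      Finset.single_le_sum (fun i _ => henn i) hmem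
    have hsum : hP.eigenvalues i0 + ∑ i ∈ Finset.univ.erase i0, hP.eigenvalues i = 1 := by
      rw [Finset.add_sum_erase _ _ (Finset.mem_univ i0)]
      exact htr'
    rw [hi0, hj1] at *
    linarith
  refine ⟨fun i => (hP.eigenvectorUnitary : Matrix n n ℂ) i i0, ?_⟩
  apply Matrix.ext
  intro i j
  nth_rewrite 1 [aux_spectral_theorem hP]
  rw [Matrix.mul_apply]
  rw [Finset.sum_eq_single i0]
  · simp only [Matrix.mul_diagonal, Function.comp_apply, Matrix.star_apply,
      Matrix.vecMulVec_apply, Pi.star_apply, hi0]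
    simp [RCLike.star_def]
  · intro k _ hk
    simp [Matrix.mul_diagonal, hzero k hk]
  · intro h
    exact absurd (Finset.mem_univ i0) h

lemma aux_rankOne_conj {P : Matrix n n ℂ} (hP : P.IsHermitian) (hidem : P * P = P)
    (htr : P.trace = 1) (X : Matrix n n ℂ) :
    P * X * P = (P * X).trace • P := by
  obtain ⟨u, hu⟩ := aux_rankOne_structure hP hidem htr
  subst hu
  apply Matrix.ext
  intro i j
  simp only [Matrix.mul_apply, Matrix.vecMulVec_apply, Matrix.smul_apply, smul_eq_mul,
    Matrix.trace, Matrix.diag_apply, Finset.sum_mul, Finset.mul_sum]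
  refine Finset.sum_congr rfl fun l _ => Finset.sum_congr rfl fun k _ => by ring

end AuxRankOne

section AuxMain

lemma aux_sum_mulVec {κ : Type*} [Fintype κ] (M : κ → Matrix n n ℂ) (v : n → ℂ) :
    (∑ k, M k) *ᵥ v = ∑ k, M k *ᵥ v := by
  funext i
  simp only [Matrix.mulVec, dotProduct, Matrix.sum_apply, Finset.sum_apply,
    Finset.sum_mul]
  rw [Finset.sum_comm]

lemma aux_mulVec_sum {κ : Type*} [Fintype κ] (M : Matrix n n ℂ) (v : κ → n → ℂ) :
    M *ᵥ (∑ k, v k) = ∑ k, M *ᵥ v k := by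
  funext i
  simp only [Matrix.mulVec, dotProduct, Finset.sum_apply, Finset.mul_sum]
  rw [Finset.sum_comm]

lemma aux_dotProduct_sum {κ : Type*} [Fintype κ] (v : n → ℂ) (w : κ → n → ℂ) :
    v ⬝ᵥ (∑ k, w k) = ∑ k, v ⬝ᵥ w k := by
  simp only [dotProduct, Finset.sum_apply, Finset.mul_sum]
  rw [Finset.sum_comm]

lemma aux_vecMulVec_mul_vecMulVec (u v u' v' : n → ℂ) :
    Matrix.vecMulVec u v * Matrix.vecMulVec u' v' = (v ⬝ᵥ u') • Matrix.vecMulVec u v' := by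
  apply Matrix.ext
  intro i j
  simp only [Matrix.mul_apply, Matrix.vecMulVec_apply, Matrix.smul_apply, smul_eq_mul,
    dotProduct, Finset.sum_mul]
  exact Finset.sum_congr rfl fun k _ => by ring

lemma aux_mul_vecMulVec_mul (A B : Matrix n n ℂ) (u v : n → ℂ) :
    A * Matrix.vecMulVec u v * B = Matrix.vecMulVec (A *ᵥ u) (v ᵥ* B) := by
  apply Matrix.ext
  intro i j
  simp only [Matrix.mul_apply, Matrix.vecMulVec_apply, Matrix.mulVec, Matrix.vecMul,
    dotProduct, Finset.sum_mul, Finset.mul_sum]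
  exact Finset.sum_congr rfl fun k _ => Finset.sum_congr rfl fun l _ => by ring

lemma aux_star_dot (v : n → ℂ) : (((star v ⬝ᵥ v).re : ℝ) : ℂ) = star v ⬝ᵥ v := by
  have h : star v ⬝ᵥ v = ((∑ i, Complex.normSq (v i) : ℝ) : ℂ) := by
    push_cast
    simp [dotProduct, Pi.star_apply, Complex.star_def,
      Complex.normSq_eq_conj_mul_self]
  rw [h]
  simp

/-- The matrix log acts as `logb 2 r` on eigenvectors. -/
lemma aux_matLog_mulVec {A : Matrix n n ℂ} (hA : A.IsHermitian) (r : ℝ) (v : n → ℂ)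
    (hv : A *ᵥ v = ((r : ℝ) : ℂ) • v) :
    matLog A *ᵥ v = ((Real.logb 2 r : ℝ) : ℂ) • v := by
  have hmat : A * Matrix.vecMulVec v (fun _ : n => (1 : ℂ)) = ((r : ℝ) : ℂ) • Matrix.vecMulVec v (fun _ : n => (1 : ℂ)) := by
    apply Matrix.ext
    intro i j
    have := congrFun hv i
    simp only [Matrix.mul_apply, Matrix.vecMulVec_apply, Matrix.smul_apply, smul_eq_mul,
      mul_one] at *
    simpa [Matrix.mulVec, dotProduct] using this
  have h2 := aux_matLog_mul hA r _ hmat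
  funext i
  have h3 := congrFun (congrFun h2 i) i
  simp only [Matrix.mul_apply, Matrix.vecMulVec_apply, Matrix.smul_apply, smul_eq_mul,
    mul_one] at h3
  simpa [Matrix.mulVec, dotProduct] using h3

end AuxMain

section AuxKron

lemma aux_kron_herm (Q : Matrix b b ℂ) (hQ : Qᴴ = Q) :
    ((1 : Matrix a a ℂ) ⊗ₖ Q)ᴴ = (1 : Matrix a a ℂ) ⊗ₖ Q := by
  apply Matrix.ext
  rintro ⟨x, i⟩ ⟨y, j⟩
  simp only [Matrix.conjTranspose_apply, Matrix.kroneckerMap_apply, star_mul']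
  rw [← Matrix.conjTranspose_apply, ← Matrix.conjTranspose_apply, Matrix.conjTranspose_one, hQ]

lemma aux_kron_mul (Q R : Matrix b b ℂ) :
    ((1 : Matrix a a ℂ) ⊗ₖ Q) * ((1 : Matrix a a ℂ) ⊗ₖ R) = (1 : Matrix a a ℂ) ⊗ₖ (Q * R) := by
  rw [← Matrix.mul_kronecker_mul, Matrix.one_mul]

lemma aux_kron_sum {κ : Type*} [Fintype κ] (F : κ → Matrix b b ℂ) :
    ∑ k, (1 : Matrix a a ℂ) ⊗ₖ F k = (1 : Matrix a a ℂ) ⊗ₖ (∑ k, F k) := by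
  apply Matrix.ext
  rintro ⟨x, i⟩ ⟨y, j⟩
  simp [Matrix.sum_apply, Matrix.kroneckerMap_apply, Finset.mul_sum]

lemma aux_trace_kron (ψ : a × b → ℂ) (Q : Matrix b b ℂ) :
    (Q * ptraceA (Matrix.vecMulVec ψ (star ψ))).trace
      = star ψ ⬝ᵥ (((1 : Matrix a a ℂ) ⊗ₖ Q) *ᵥ ψ) := by
  have hL : (Q * ptraceA (Matrix.vecMulVec ψ (star ψ))).trace
      = ∑ i : b, ∑ j : b, ∑ x : a, star (ψ (x, i)) * Q i j * ψ (x, j) := by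
    simp only [Matrix.trace, Matrix.diag_apply, Matrix.mul_apply, ptraceA,
      Matrix.vecMulVec_apply, Pi.star_apply, Finset.mul_sum]
    exact Finset.sum_congr rfl fun i _ => Finset.sum_congr rfl fun j _ =>
      Finset.sum_congr rfl fun x _ => by ring
  have hR : star ψ ⬝ᵥ (((1 : Matrix a a ℂ) ⊗ₖ Q) *ᵥ ψ)
      = ∑ x : a, ∑ i : b, ∑ j : b, star (ψ (x, i)) * Q i j * ψ (x, j) := by
    simp only [dotProduct, Matrix.mulVec, Matrix.kroneckerMap_apply, Pi.star_apply]
    rw [Fintype.sum_prod_type]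
    refine Finset.sum_congr rfl fun x _ => Finset.sum_congr rfl fun i _ => ?_
    rw [Fintype.sum_prod_type]
    have hy : (∑ y : a, ∑ j : b, ((1 : Matrix a a ℂ) x y * Q i j) * ψ (y, j))
        = ∑ j : b, Q i j * ψ (x, j) := by
      rw [Finset.sum_eq_single x]
      · exact Finset.sum_congr rfl fun j _ => by simp [Matrix.one_apply]
      · intro y _ hyx
        refine Finset.sum_eq_zero fun j _ => ?_
        simp [Matrix.one_apply, Ne.symm hyx]
      · intro hx; exact absurd (Finset.mem_univ x) hx
    rw [hy, Finset.mul_sum]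
    exact Finset.sum_congr rfl fun j _ => by ring
  have e1 : (∑ x : a, ∑ i : b, ∑ j : b, star (ψ (x, i)) * Q i j * ψ (x, j))
      = ∑ i : b, ∑ x : a, ∑ j : b, star (ψ (x, i)) * Q i j * ψ (x, j) := Finset.sum_comm
  have e2 : (∑ i : b, ∑ x : a, ∑ j : b, star (ψ (x, i)) * Q i j * ψ (x, j))
      = ∑ i : b, ∑ j : b, ∑ x : a, star (ψ (x, i)) * Q i j * ψ (x, j) :=
    Finset.sum_congr rfl fun i _ => Finset.sum_comm
  rw [hL, hR, e1, e2]

end AuxKron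

section MainLemma

set_option maxHeartbeats 1000000 in
lemma aux_main (ψ : a × b → ℂ) (hψ : star ψ ⬝ᵥ ψ = 1)
    (P : b → Matrix b b ℂ) (hP : IsRankOneMeas P)
    (hinv : Invariant P (ptraceA (Matrix.vecMulVec ψ (star ψ)))) :
    relEntropy (Matrix.vecMulVec ψ (star ψ)) (postMeas P (Matrix.vecMulVec ψ (star ψ))) =
      vnEntropy (ptraceA (Matrix.vecMulVec ψ (star ψ))) := by
  obtain ⟨⟨hherm, horth, hsum⟩, htr⟩ := hP
  have hinv' : ∑ k, P k * ptraceA (Matrix.vecMulVec ψ (star ψ)) * P k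
      = ptraceA (Matrix.vecMulVec ψ (star ψ)) := hinv
  have hρherm : (Matrix.vecMulVec ψ (star ψ)).IsHermitian := aux_vecMulVec_herm ψ
  have hρidem : Matrix.vecMulVec ψ (star ψ) * Matrix.vecMulVec ψ (star ψ)
      = Matrix.vecMulVec ψ (star ψ) := by
    rw [aux_vecMulVec_mul_vecMulVec, hψ, one_smul]
  have hMherm : ∀ k, ((1 : Matrix a a ℂ) ⊗ₖ P k)ᴴ = (1 : Matrix a a ℂ) ⊗ₖ P k :=
    fun k => aux_kron_herm (P k) (hherm k)
  have hPP : ∀ k, P k * P k = P k := by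
    intro k; rw [horth k k, if_pos rfl]
  have hMmul : ∀ j k, ((1 : Matrix a a ℂ) ⊗ₖ P j) * ((1 : Matrix a a ℂ) ⊗ₖ P k)
      = (1 : Matrix a a ℂ) ⊗ₖ (P j * P k) := fun j k => aux_kron_mul (P j) (P k)
  have hMsum : ∑ k, (1 : Matrix a a ℂ) ⊗ₖ P k = 1 := by
    rw [aux_kron_sum, hsum, Matrix.one_kronecker_one]
  obtain ⟨q, hqdef⟩ : ∃ q : b → ℝ, ∀ k, ((q k : ℝ) : ℂ)
      = star (((1 : Matrix a a ℂ) ⊗ₖ P k) *ᵥ ψ) ⬝ᵥ (((1 : Matrix a a ℂ) ⊗ₖ P k) *ᵥ ψ) :=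
    ⟨_, fun k => aux_star_dot _⟩
  have hdot' : ∀ j k,
      star (((1 : Matrix a a ℂ) ⊗ₖ P j) *ᵥ ψ) ⬝ᵥ (((1 : Matrix a a ℂ) ⊗ₖ P k) *ᵥ ψ)
      = star ψ ⬝ᵥ ((((1 : Matrix a a ℂ) ⊗ₖ P j) * ((1 : Matrix a a ℂ) ⊗ₖ P k)) *ᵥ ψ) := by
    intro j k
    rw [Matrix.star_mulVec, hMherm j, dotProduct_mulVec, dotProduct_mulVec,
      Matrix.vecMul_vecMul]
  have hpψ : ∀ k, star ψ ⬝ᵥ (((1 : Matrix a a ℂ) ⊗ₖ P k) *ᵥ ψ) = ((q k : ℝ) : ℂ) := by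
    intro k
    have h2 := hdot' k k
    rw [hMmul k k, hPP k] at h2
    rw [← h2]
    exact (hqdef k).symm
  have hdot0 : ∀ j k, j ≠ k →
      star (((1 : Matrix a a ℂ) ⊗ₖ P j) *ᵥ ψ) ⬝ᵥ (((1 : Matrix a a ℂ) ⊗ₖ P k) *ᵥ ψ) = 0 := by
    intro j k hjk
    rw [hdot' j k, hMmul j k, horth j k, if_neg hjk]
    simp
  have hσ : postMeas P (Matrix.vecMulVec ψ (star ψ))
      = ∑ k, Matrix.vecMulVec (((1 : Matrix a a ℂ) ⊗ₖ P k) *ᵥ ψ)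
          (star (((1 : Matrix a a ℂ) ⊗ₖ P k) *ᵥ ψ)) := by
    simp only [postMeas]
    refine Finset.sum_congr rfl fun k _ => ?_
    rw [aux_mul_vecMulVec_mul, Matrix.star_mulVec, hMherm k]
  have hσherm : (postMeas P (Matrix.vecMulVec ψ (star ψ))).IsHermitian := by
    rw [hσ]
    show (∑ k, _)ᴴ = _
    rw [Matrix.conjTranspose_sum]
    exact Finset.sum_congr rfl fun k _ => aux_vecMulVec_herm _
  have hψdec : ∑ k, ((1 : Matrix a a ℂ) ⊗ₖ P k) *ᵥ ψ = ψ := by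
    rw [← aux_sum_mulVec, hMsum, Matrix.one_mulVec]
  have hσeig : ∀ k, postMeas P (Matrix.vecMulVec ψ (star ψ)) *ᵥ
        (((1 : Matrix a a ℂ) ⊗ₖ P k) *ᵥ ψ)
      = ((q k : ℝ) : ℂ) • (((1 : Matrix a a ℂ) ⊗ₖ P k) *ᵥ ψ) := by
    intro k
    rw [hσ, aux_sum_mulVec]
    have h3 : ∀ j, Matrix.vecMulVec (((1 : Matrix a a ℂ) ⊗ₖ P j) *ᵥ ψ)
        (star (((1 : Matrix a a ℂ) ⊗ₖ P j) *ᵥ ψ)) *ᵥ (((1 : Matrix a a ℂ) ⊗ₖ P k) *ᵥ ψ)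
        = (if j = k then ((q k : ℝ) : ℂ) • (((1 : Matrix a a ℂ) ⊗ₖ P j) *ᵥ ψ) else 0) := by
      intro j
      rw [aux_vecMulVec_mulVec]
      by_cases h : j = k
      · subst h
        rw [if_pos rfl, ← hqdef j]
      · rw [if_neg h, hdot0 j k h, zero_smul]
    rw [Finset.sum_congr rfl fun j _ => h3 j]
    simp
  have hL : ∀ k, matLog (postMeas P (Matrix.vecMulVec ψ (star ψ))) *ᵥ
        (((1 : Matrix a a ℂ) ⊗ₖ P k) *ᵥ ψ)
      = ((Real.logb 2 (q k) : ℝ) : ℂ) • (((1 : Matrix a a ℂ) ⊗ₖ P k) *ᵥ ψ) :=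
    fun k => aux_matLog_mulVec hσherm (q k) _ (hσeig k)
  have hAside : relEntropy (Matrix.vecMulVec ψ (star ψ))
        (postMeas P (Matrix.vecMulVec ψ (star ψ)))
      = -∑ k, q k * Real.logb 2 (q k) := by
    simp only [relEntropy]
    rw [aux_matLog_idem hρherm hρidem, zero_sub, Matrix.mul_neg, Matrix.trace_neg]
    rw [aux_trace_vecMulVec_mul]
    have h5 : ∀ k, star ψ ⬝ᵥ (((Real.logb 2 (q k) : ℝ) : ℂ) •
          (((1 : Matrix a a ℂ) ⊗ₖ P k) *ᵥ ψ))
        = ((q k * Real.logb 2 (q k) : ℝ) : ℂ) := by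
      intro k
      rw [dotProduct_smul, hpψ k, smul_eq_mul]
      push_cast
      ring
    have h4 : star ψ ⬝ᵥ (matLog (postMeas P (Matrix.vecMulVec ψ (star ψ))) *ᵥ ψ)
        = ((∑ k, q k * Real.logb 2 (q k) : ℝ) : ℂ) :=
      calc star ψ ⬝ᵥ (matLog (postMeas P (Matrix.vecMulVec ψ (star ψ))) *ᵥ ψ)
          = star ψ ⬝ᵥ (matLog (postMeas P (Matrix.vecMulVec ψ (star ψ))) *ᵥ
              (∑ k, ((1 : Matrix a a ℂ) ⊗ₖ P k) *ᵥ ψ)) :=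
            congrArg (fun v => star ψ ⬝ᵥ (matLog (postMeas P (Matrix.vecMulVec ψ (star ψ))) *ᵥ v))
              hψdec.symm
        _ = star ψ ⬝ᵥ (∑ k, matLog (postMeas P (Matrix.vecMulVec ψ (star ψ))) *ᵥ
              (((1 : Matrix a a ℂ) ⊗ₖ P k) *ᵥ ψ)) :=
            congrArg (fun w => star ψ ⬝ᵥ w) (aux_mulVec_sum _ _)
        _ = star ψ ⬝ᵥ (∑ k, ((Real.logb 2 (q k) : ℝ) : ℂ) •
              (((1 : Matrix a a ℂ) ⊗ₖ P k) *ᵥ ψ)) :=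
            congrArg (fun w => star ψ ⬝ᵥ w) (Finset.sum_congr rfl fun k _ => hL k)
        _ = ∑ k, star ψ ⬝ᵥ (((Real.logb 2 (q k) : ℝ) : ℂ) •
              (((1 : Matrix a a ℂ) ⊗ₖ P k) *ᵥ ψ)) := aux_dotProduct_sum _ _
        _ = ∑ k, ((q k * Real.logb 2 (q k) : ℝ) : ℂ) :=
            Finset.sum_congr rfl fun k _ => h5 k
        _ = ((∑ k, q k * Real.logb 2 (q k) : ℝ) : ℂ) := (Complex.ofReal_sum _ _).symm
    rw [h4]
    simp
  -- the B side
  have hρBherm : (ptraceA (Matrix.vecMulVec ψ (star ψ))).IsHermitian := by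
    show _ᴴ = _
    apply Matrix.ext
    intro i j
    simp only [Matrix.conjTranspose_apply, ptraceA, Matrix.vecMulVec_apply, Pi.star_apply,
      star_sum, star_mul', star_star]
    exact Finset.sum_congr rfl fun x _ => by ring
  have hQtr : ∀ k, (P k * ptraceA (Matrix.vecMulVec ψ (star ψ))).trace = ((q k : ℝ) : ℂ) := by
    intro k
    rw [aux_trace_kron ψ (P k), hpψ k]
  have hconj : ∀ k, P k * ptraceA (Matrix.vecMulVec ψ (star ψ)) * P k
      = ((q k : ℝ) : ℂ) • P k := by
    intro k
    rw [aux_rankOne_conj (hherm k) (hPP k) (htr k), hQtr k]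
  have hdec : ptraceA (Matrix.vecMulVec ψ (star ψ)) = ∑ k, ((q k : ℝ) : ℂ) • P k := by
    conv_lhs => rw [← hinv']
    exact Finset.sum_congr rfl fun k _ => hconj k
  have heigB : ∀ k, ptraceA (Matrix.vecMulVec ψ (star ψ)) * P k
      = ((q k : ℝ) : ℂ) • P k := by
    intro k
    rw [hdec, Finset.sum_mul]
    have h6 : ∀ j, (((q j : ℝ) : ℂ) • P j) * P k
        = (if j = k then ((q k : ℝ) : ℂ) • P k else 0) := by
      intro j
      rw [smul_mul_assoc, horth j k]
      by_cases h : j = k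
      · subst h; simp
      · simp [h]
    rw [Finset.sum_congr rfl fun j _ => h6 j]
    simp
  have hLB : ∀ k, matLog (ptraceA (Matrix.vecMulVec ψ (star ψ))) * P k
      = ((Real.logb 2 (q k) : ℝ) : ℂ) • P k :=
    fun k => aux_matLog_mul hρBherm (q k) (P k) (heigB k)
  have hBtrace : (ptraceA (Matrix.vecMulVec ψ (star ψ)) *
        matLog (ptraceA (Matrix.vecMulVec ψ (star ψ)))).trace
      = ((∑ k, q k * Real.logb 2 (q k) : ℝ) : ℂ) := by
    nth_rewrite 1 [hdec]
    rw [Finset.sum_mul, Matrix.trace_sum]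
    have h7 : ∀ k, ((((q k : ℝ) : ℂ) • P k) *
          matLog (ptraceA (Matrix.vecMulVec ψ (star ψ)))).trace
        = ((q k * Real.logb 2 (q k) : ℝ) : ℂ) := by
      intro k
      rw [smul_mul_assoc, Matrix.trace_smul, Matrix.trace_mul_comm, hLB k,
        Matrix.trace_smul, htr k, smul_eq_mul, smul_eq_mul]
      push_cast
      ring
    rw [Finset.sum_congr rfl fun k _ => h7 k, ← Complex.ofReal_sum]
  have hBside : vnEntropy (ptraceA (Matrix.vecMulVec ψ (star ψ)))
      = -∑ k, q k * Real.logb 2 (q k) := by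
    rw [aux_vnEntropy_eq hρBherm, hBtrace]
    simp
  rw [hAside, hBside]

end MainLemma

section Witness

lemma aux_conj_mul2 {A : Matrix n n ℂ} (hA : A.IsHermitian) (X Y : Matrix n n ℂ) :
    ((hA.eigenvectorUnitary : Matrix n n ℂ) * X * star (hA.eigenvectorUnitary : Matrix n n ℂ)) *
      ((hA.eigenvectorUnitary : Matrix n n ℂ) * Y * star (hA.eigenvectorUnitary : Matrix n n ℂ))
    = (hA.eigenvectorUnitary : Matrix n n ℂ) * (X * Y) *
        star (hA.eigenvectorUnitary : Matrix n n ℂ) := by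
  simp only [Matrix.mul_assoc]
  rw [aux_starU hA (Y * star (hA.eigenvectorUnitary : Matrix n n ℂ))]

lemma aux_diagonal_sum {κ : Type*} [Fintype κ] (d : κ → n → ℂ) :
    ∑ k, Matrix.diagonal (d k) = Matrix.diagonal (∑ k, d k) := by
  apply Matrix.ext
  intro i j
  by_cases h : i = j
  · subst h; simp [Matrix.sum_apply, Matrix.diagonal_apply_eq, Finset.sum_apply]
  · simp [Matrix.sum_apply, Matrix.diagonal_apply_ne _ h, Finset.sum_apply]

lemma aux_ptraceA_herm (ψ : a × b → ℂ) :
    (ptraceA (Matrix.vecMulVec ψ (star ψ))).IsHermitian := by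
  show _ᴴ = _
  apply Matrix.ext
  intro i j
  simp only [Matrix.conjTranspose_apply, ptraceA, Matrix.vecMulVec_apply, Pi.star_apply,
    star_sum, star_mul', star_star]
  exact Finset.sum_congr rfl fun x _ => by ring

lemma aux_exists_meas (B : Matrix b b ℂ) (hB : B.IsHermitian) :
    ∃ P : b → Matrix b b ℂ, IsRankOneMeas P ∧ Invariant P B := by
  refine ⟨fun k => (hB.eigenvectorUnitary : Matrix b b ℂ) * Matrix.diagonal (Pi.single k 1) *
      star (hB.eigenvectorUnitary : Matrix b b ℂ), ⟨⟨?_, ?_, ?_⟩, ?_⟩, ?_⟩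
  · -- Hermitian
    intro k
    dsimp only
    show _ᴴ = _
    simp only [Matrix.star_eq_conjTranspose, Matrix.conjTranspose_mul,
      Matrix.conjTranspose_conjTranspose, Matrix.diagonal_conjTranspose]
    rw [show star (Pi.single k (1:ℂ)) = (Pi.single k (1:ℂ) : b → ℂ) from by
      funext i; by_cases h : i = k <;> simp [Pi.single_apply, h]]
    rw [Matrix.mul_assoc]
  · -- orthogonality
    intro j k
    dsimp only
    rw [aux_conj_mul2 hB, Matrix.diagonal_mul_diagonal]
    by_cases h : j = k
    · subst h
      rw [if_pos rfl]
      rw [show (fun i => Pi.single j (1:ℂ) i * Pi.single j (1:ℂ) i)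
          = (Pi.single j (1:ℂ) : b → ℂ) from by
        funext i; by_cases hik : i = j <;> simp [Pi.single_apply, hik]]
    · rw [if_neg h]
      rw [show (fun i => Pi.single j (1:ℂ) i * Pi.single k (1:ℂ) i) = (fun _ => (0:ℂ)) from by
        funext i
        by_cases hij : i = j
        · have hik : i ≠ k := fun hk => h (hij.symm.trans hk)
          simp [Pi.single_apply, hij, hik]
          exact h
        · simp [Pi.single_apply, hij]]
      rw [Matrix.diagonal_zero, Matrix.mul_zero, Matrix.zero_mul]
  · -- sum to one
    dsimp only
    rw [← Finset.sum_mul, ← Finset.mul_sum, aux_diagonal_sum]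
    rw [show (∑ k : b, Pi.single k (1:ℂ)) = fun _ => (1:ℂ) from Finset.univ_sum_single _]
    rw [Matrix.diagonal_one, Matrix.mul_one,
      Matrix.mem_unitaryGroup_iff.mp hB.eigenvectorUnitary.2]
  · -- trace one
    intro k
    dsimp only
    rw [aux_trace_conj hB, Matrix.trace_diagonal]
    simp [Pi.single_apply]
  · -- invariance
    show ∑ k, _ = B
    dsimp only
    have hper : ∀ k : b, ((hB.eigenvectorUnitary : Matrix b b ℂ) *
          Matrix.diagonal (Pi.single k 1) * star (hB.eigenvectorUnitary : Matrix b b ℂ)) * B *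
        ((hB.eigenvectorUnitary : Matrix b b ℂ) * Matrix.diagonal (Pi.single k 1) *
          star (hB.eigenvectorUnitary : Matrix b b ℂ))
        = (hB.eigenvectorUnitary : Matrix b b ℂ) *
            Matrix.diagonal (Pi.single k (RCLike.ofReal (hB.eigenvalues k))) *
            star (hB.eigenvectorUnitary : Matrix b b ℂ) := by
      intro k
      calc ((hB.eigenvectorUnitary : Matrix b b ℂ) * Matrix.diagonal (Pi.single k 1) *
            star (hB.eigenvectorUnitary : Matrix b b ℂ)) * B *
          ((hB.eigenvectorUnitary : Matrix b b ℂ) * Matrix.diagonal (Pi.single k 1) *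
            star (hB.eigenvectorUnitary : Matrix b b ℂ))
          = ((hB.eigenvectorUnitary : Matrix b b ℂ) * Matrix.diagonal (Pi.single k 1) *
              star (hB.eigenvectorUnitary : Matrix b b ℂ)) *
            ((hB.eigenvectorUnitary : Matrix b b ℂ) *
              Matrix.diagonal (RCLike.ofReal ∘ hB.eigenvalues) *
              star (hB.eigenvectorUnitary : Matrix b b ℂ)) *
            ((hB.eigenvectorUnitary : Matrix b b ℂ) * Matrix.diagonal (Pi.single k 1) *
              star (hB.eigenvectorUnitary : Matrix b b ℂ)) := by
            rw [← aux_spectral_theorem hB]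
        _ = (hB.eigenvectorUnitary : Matrix b b ℂ) *
              Matrix.diagonal (Pi.single k (RCLike.ofReal (hB.eigenvalues k))) *
              star (hB.eigenvectorUnitary : Matrix b b ℂ) := ?_
      rw [aux_conj_mul2 hB, aux_conj_mul2 hB, Matrix.diagonal_mul_diagonal,
        Matrix.diagonal_mul_diagonal]
      exact congrArg (fun D => (hB.eigenvectorUnitary : Matrix b b ℂ) * D *
        star (hB.eigenvectorUnitary : Matrix b b ℂ)) (congrArg Matrix.diagonal (by
          funext i
          by_cases hik : i = k
          · simp [Pi.single_apply, Function.comp, hik]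
          · simp [Pi.single_apply, Function.comp, hik]))
    rw [Finset.sum_congr rfl fun k _ => hper k, ← Finset.sum_mul, ← Finset.mul_sum,
      aux_diagonal_sum]
    rw [show (∑ k : b, Pi.single k ((RCLike.ofReal (hB.eigenvalues k)) : ℂ))
        = RCLike.ofReal ∘ hB.eigenvalues from Finset.univ_sum_single _]
    exact (aux_spectral_theorem hB).symm

end Witness

/-- For a bipartite pure state, S(ρ‖ρ̃) = S(ρ^B) for every locally invariant
rank-one measurement; hence N_RE equals the entropy of the measured subsystem. -/
theorem stmt6 (ψ : a × b → ℂ) (hψ : star ψ ⬝ᵥ ψ = 1) :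
    (∀ P : b → Matrix b b ℂ, IsRankOneMeas P →
      Invariant P (ptraceA (Matrix.vecMulVec ψ (star ψ))) →
      relEntropy (Matrix.vecMulVec ψ (star ψ))
          (postMeas P (Matrix.vecMulVec ψ (star ψ))) =
        vnEntropy (ptraceA (Matrix.vecMulVec ψ (star ψ)))) ∧
    NRE (Matrix.vecMulVec ψ (star ψ)) =
      vnEntropy (ptraceA (Matrix.vecMulVec ψ (star ψ))) := by
  have hpart1 : ∀ P : b → Matrix b b ℂ, IsRankOneMeas P →
      Invariant P (ptraceA (Matrix.vecMulVec ψ (star ψ))) →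
      relEntropy (Matrix.vecMulVec ψ (star ψ))
          (postMeas P (Matrix.vecMulVec ψ (star ψ))) =
        vnEntropy (ptraceA (Matrix.vecMulVec ψ (star ψ))) :=
    fun P hP hinv => aux_main ψ hψ P hP hinv
  refine ⟨hpart1, ?_⟩
  obtain ⟨P₀, hP₀, hinv₀⟩ := aux_exists_meas (ptraceA (Matrix.vecMulVec ψ (star ψ)))
    (aux_ptraceA_herm ψ)
  have hval := hpart1 P₀ hP₀ hinv₀
  have hset : {x | ∃ P : b → Matrix b b ℂ, IsRankOneMeas P ∧
      Invariant P (ptraceA (Matrix.vecMulVec ψ (star ψ))) ∧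
      x = relEntropy (Matrix.vecMulVec ψ (star ψ))
        (postMeas P (Matrix.vecMulVec ψ (star ψ)))}
      = {vnEntropy (ptraceA (Matrix.vecMulVec ψ (star ψ)))} := by
    apply Set.eq_singleton_iff_unique_mem.mpr
    constructor
    · exact ⟨P₀, hP₀, hinv₀, hval.symm⟩
    · rintro x ⟨P, hP, hinv, rfl⟩
      exact hpart1 P hP hinv
  show sSup _ = _
  rw [hset, csSup_singleton]


end
end

section
/- For a bipartite density matrix ρ^{AB}, the relative entropy of nonlocality plus the minimal quantum side information equals the quantum mutual information: N_RE(ρ^{AB}) + S_χ(ρ^{AB}) = I(ρ^{AB}), where S_χ(ρ^{AB}) = min over locally invariant measurements {Π_k^B} of [S(ρ^A) − Σ_k p_k S(ρ_k^A)] and I(ρ^{AB}) = S(ρ^A) + S(ρ^B) − S(ρ^{AB}). -/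
open scoped Kronecker Classical ComplexOrder
open Matrix

noncomputable section

variable {n : Type*} [Fintype n] [DecidableEq n]

variable {a b : Type*} [Fintype a] [DecidableEq a] [Fintype b] [DecidableEq b]
variable {ι : Type*} [Fintype ι]

section Helpers
open Polynomial
set_option linter.unusedSectionVars false

lemma u_mul_star (V : Matrix.unitaryGroup n ℂ) :
    (V : Matrix n n ℂ) * star (V : Matrix n n ℂ) = 1 :=
  Matrix.mem_unitaryGroup_iff.mp V.2

lemma star_mul_u (V : Matrix.unitaryGroup n ℂ) :
    star (V : Matrix n n ℂ) * (V : Matrix n n ℂ) = 1 :=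
  Matrix.mem_unitaryGroup_iff'.mp V.2

lemma uMulU (V : Matrix.unitaryGroup n ℂ) (d e : n → ℂ) :
    ((V : Matrix n n ℂ) * diagonal d * star (V : Matrix n n ℂ)) *
      ((V : Matrix n n ℂ) * diagonal e * star (V : Matrix n n ℂ)) =
    (V : Matrix n n ℂ) * diagonal (d * e) * star (V : Matrix n n ℂ) := by
  calc (V : Matrix n n ℂ) * diagonal d * star (V : Matrix n n ℂ) *
      ((V : Matrix n n ℂ) * diagonal e * star (V : Matrix n n ℂ))
      = (V : Matrix n n ℂ) * diagonal d * (star (V : Matrix n n ℂ) * (V : Matrix n n ℂ)) *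
          diagonal e * star (V : Matrix n n ℂ) := by
        simp only [Matrix.mul_assoc]
    _ = (V : Matrix n n ℂ) * (diagonal d * diagonal e) * star (V : Matrix n n ℂ) := by
        rw [star_mul_u]; simp only [Matrix.mul_one, Matrix.mul_assoc]
    _ = _ := by rw [diagonal_mul_diagonal, Pi.mul_def]

lemma uTrace (V : Matrix.unitaryGroup n ℂ) (d : n → ℂ) :
    ((V : Matrix n n ℂ) * diagonal d * star (V : Matrix n n ℂ)).trace = ∑ i, d i := by
  rw [Matrix.trace_mul_cycle, star_mul_u, one_mul, trace_diagonal]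

lemma uHerm (V : Matrix.unitaryGroup n ℂ) (r : n → ℝ) :
    ((V : Matrix n n ℂ) * diagonal (fun i => (r i : ℂ)) * star (V : Matrix n n ℂ)).IsHermitian := by
  have h1 : (diagonal (fun i => ((r i : ℝ) : ℂ)))ᴴ = diagonal (fun i => ((r i : ℝ) : ℂ)) := by
    rw [diagonal_conjTranspose]
    have h2 : (star fun i => ((r i : ℝ) : ℂ)) = fun i => ((r i : ℝ) : ℂ) := by
      funext i; exact Complex.conj_ofReal (r i)
    rw [h2]
  unfold Matrix.IsHermitian
  rw [conjTranspose_mul, conjTranspose_mul, star_eq_conjTranspose,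
    conjTranspose_conjTranspose, h1]
  simp only [Matrix.mul_assoc]

def conjAlgHom (V : Matrix.unitaryGroup n ℂ) : Matrix n n ℂ →ₐ[ℂ] Matrix n n ℂ where
  toFun X := (V : Matrix n n ℂ) * X * star (V : Matrix n n ℂ)
  map_one' := by simp only [Matrix.mul_one]; exact u_mul_star V
  map_mul' X Y := by
    simp only [Matrix.mul_assoc]
    rw [← Matrix.mul_assoc (star (V : Matrix n n ℂ)), star_mul_u, one_mul]
  map_zero' := by simp
  map_add' X Y := by simp only [Matrix.mul_add, Matrix.add_mul]
  commutes' c := by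
    simp only [Algebra.algebraMap_eq_smul_one, Matrix.mul_smul, Matrix.smul_mul, mul_one,
      u_mul_star]

lemma uAeval (V : Matrix.unitaryGroup n ℂ) (D : Matrix n n ℂ) (p : ℂ[X]) :
    (Polynomial.aeval ((V : Matrix n n ℂ) * D * star (V : Matrix n n ℂ))) p =
      (V : Matrix n n ℂ) * (Polynomial.aeval D) p * star (V : Matrix n n ℂ) := by
  have := Polynomial.aeval_algHom_apply (conjAlgHom V) D p
  simpa [conjAlgHom] using this

lemma aeval_diag (d : n → ℂ) (p : ℂ[X]) :
    (Polynomial.aeval (diagonal d)) p = diagonal (fun i => p.eval (d i)) := by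
  induction p using Polynomial.induction_on' with
  | add p q hp hq => simp [hp, hq, map_add, diagonal_add]
  | monomial k c =>
      simp only [Polynomial.aeval_monomial, Polynomial.eval_monomial]
      rw [diagonal_pow, Algebra.algebraMap_eq_smul_one]
      rw [smul_mul_assoc, one_mul, ← diagonal_smul]
      congr 1

lemma spectral_decomp {A : Matrix n n ℂ} (hA : A.IsHermitian) :
    A = (hA.eigenvectorUnitary : Matrix n n ℂ) *
      diagonal (fun i => ((hA.eigenvalues i : ℝ) : ℂ)) *
      star (hA.eigenvectorUnitary : Matrix n n ℂ) := by
  have := hA.spectral_theorem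
  convert this using 3
  simp [Unitary.conjStarAlgAut_apply, Function.comp_def]

lemma matLog_of_decomp (A : Matrix n n ℂ) (V : Matrix.unitaryGroup n ℂ) (μ : n → ℝ)
    (hd : A = (V : Matrix n n ℂ) * diagonal (fun i => ((μ i : ℝ) : ℂ)) * star (V : Matrix n n ℂ)) :
    matLog A = (V : Matrix n n ℂ) * diagonal (fun i => ((Real.logb 2 (μ i) : ℝ) : ℂ)) *
      star (V : Matrix n n ℂ) := by
  have hA : A.IsHermitian := hd ▸ uHerm V μ
  set T : Finset ℂ :=
    (Finset.univ.image fun i => ((μ i : ℝ) : ℂ)) ∪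
      (Finset.univ.image fun i => ((hA.eigenvalues i : ℝ) : ℂ)) with hT
  set g : ℂ → ℂ := fun z => ((Real.logb 2 z.re : ℝ) : ℂ) with hg
  set p : ℂ[X] := Lagrange.interpolate T id g with hp
  have hinj : Set.InjOn id (T : Set ℂ) := Function.injective_id.injOn
  have hev : ∀ z ∈ T, p.eval z = g z := fun z hz => by
    exact Lagrange.eval_interpolate_at_node g hinj hz
  have key1 : (Polynomial.aeval A) p =
      (V : Matrix n n ℂ) * diagonal (fun i => ((Real.logb 2 (μ i) : ℝ) : ℂ)) *
        star (V : Matrix n n ℂ) := by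
    rw [hd, uAeval, aeval_diag]
    have hfun : (fun i => Polynomial.eval ((μ i : ℝ) : ℂ) p)
        = fun i => ((Real.logb 2 (μ i) : ℝ) : ℂ) := by
      funext i
      rw [hev _ (Finset.mem_union_left _ (Finset.mem_image_of_mem _ (Finset.mem_univ i)))]
      simp [hg]
    rw [hfun]
  have key2 : (Polynomial.aeval A) p = matLog A := by
    rw [matLog, dif_pos hA]
    conv_lhs => rw [spectral_decomp hA]
    rw [uAeval, aeval_diag]
    have hfun : (fun i => Polynomial.eval ((hA.eigenvalues i : ℝ) : ℂ) p)
        = fun i => ((Real.logb 2 (hA.eigenvalues i) : ℝ) : ℂ) := by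
      funext i
      rw [hev _ (Finset.mem_union_right _ (Finset.mem_image_of_mem _ (Finset.mem_univ i)))]
      simp [hg]
    rw [hfun]
  rw [← key2, key1]

lemma re_trace_mul_matLog (A : Matrix n n ℂ) (V : Matrix.unitaryGroup n ℂ) (μ : n → ℝ)
    (hd : A = (V : Matrix n n ℂ) * diagonal (fun i => ((μ i : ℝ) : ℂ)) * star (V : Matrix n n ℂ)) :
    ((A * matLog A).trace).re = ∑ i, μ i * Real.logb 2 (μ i) := by
  rw [matLog_of_decomp A V μ hd]
  conv_lhs => rw [hd]
  rw [uMulU, uTrace]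
  have : ∀ i, ((μ i : ℝ) : ℂ) * ((Real.logb 2 (μ i) : ℝ) : ℂ)
      = ((μ i * Real.logb 2 (μ i) : ℝ) : ℂ) := by intro i; push_cast; ring
  simp only [Pi.mul_apply, this]
  rw [← Complex.ofReal_sum]
  exact Complex.ofReal_re _

lemma vnEntropy_of_decomp (A : Matrix n n ℂ) (V : Matrix.unitaryGroup n ℂ) (μ : n → ℝ)
    (hd : A = (V : Matrix n n ℂ) * diagonal (fun i => ((μ i : ℝ) : ℂ)) * star (V : Matrix n n ℂ)) :
    vnEntropy A = -∑ i, μ i * Real.logb 2 (μ i) := by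
  have hA : A.IsHermitian := hd ▸ uHerm V μ
  have e1 : vnEntropy A = -((A * matLog A).trace).re := by
    rw [vnEntropy, dif_pos hA,
      re_trace_mul_matLog A hA.eigenvectorUnitary hA.eigenvalues (spectral_decomp hA)]
  rw [e1, re_trace_mul_matLog A V μ hd]

lemma uApply (V : Matrix.unitaryGroup n ℂ) (d : n → ℂ) (y z : n) :
    ((V : Matrix n n ℂ) * diagonal d * star (V : Matrix n n ℂ)) y z
      = ∑ i, (V : Matrix n n ℂ) y i * d i * star ((V : Matrix n n ℂ) z i) := by
  rw [Matrix.mul_apply]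
  refine Finset.sum_congr rfl fun i _ => ?_
  rw [Matrix.mul_diagonal]
  rfl

lemma uCancel (V : Matrix.unitaryGroup n ℂ) (D E : Matrix n n ℂ)
    (h : (V : Matrix n n ℂ) * D * star (V : Matrix n n ℂ)
        = (V : Matrix n n ℂ) * E * star (V : Matrix n n ℂ)) : D = E := by
  have := congrArg (fun X => star (V : Matrix n n ℂ) * X * (V : Matrix n n ℂ)) h
  simpa only [Matrix.mul_assoc, ← Matrix.mul_assoc (star (V : Matrix n n ℂ)), star_mul_u,
    one_mul, u_mul_star, Matrix.mul_one] using this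

lemma rankone_vec {Q : Matrix n n ℂ} (hH : Q.IsHermitian) (hid : Q * Q = Q)
    (htr : Q.trace = 1) :
    ∃ v : n → ℂ, (∀ y z, Q y z = v y * star (v z)) ∧ (∑ y, star (v y) * v y) = 1 := by
  set U := hH.eigenvectorUnitary with hU
  set lam := hH.eigenvalues with hlam
  have hspec := spectral_decomp hH
  -- idempotent eigenvalues
  have hDD : ∀ i, lam i * lam i = lam i := by
    intro i
    have h2 : Q * Q = (U : Matrix n n ℂ) *
        diagonal ((fun i => ((lam i : ℝ) : ℂ)) * (fun i => ((lam i : ℝ) : ℂ))) *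
        star (U : Matrix n n ℂ) := by
      conv_lhs => rw [hspec]
      rw [uMulU]
    have h3 := h2.symm.trans (hid.trans hspec)
    have h4 := uCancel U _ _ h3
    have h5 := congrArg (fun M => M i i) h4
    simp only [diagonal_apply_eq, Pi.mul_apply] at h5
    exact_mod_cast h5
  have hlam01 : ∀ i, lam i = 0 ∨ lam i = 1 := by
    intro i
    have : lam i * (lam i - 1) = 0 := by
      have := hDD i; ring_nf; nlinarith [hDD i]
    rcases mul_eq_zero.mp this with h | h
    · exact Or.inl h
    · exact Or.inr (by linarith)
  have htr' : ∑ i, lam i = 1 := by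
    have h1 := htr
    conv_lhs at h1 => rw [hspec]
    rw [uTrace] at h1
    have h2 : ((∑ i, lam i : ℝ) : ℂ) = 1 := by push_cast; exact h1
    exact_mod_cast h2
  classical
  have hsum : ∑ i, lam i = ((Finset.univ.filter (fun i => lam i = 1)).card : ℝ) := by
    rw [← Finset.sum_filter_add_sum_filter_not Finset.univ (fun i => lam i = 1)]
    have e1 : ∑ i ∈ Finset.univ.filter (fun i => lam i = 1), lam i
        = ((Finset.univ.filter (fun i => lam i = 1)).card : ℝ) := by
      rw [Finset.sum_congr rfl (fun i hi => (Finset.mem_filter.mp hi).2)]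
      simp
    have e2 : ∑ i ∈ Finset.univ.filter (fun i => ¬ lam i = 1), lam i = 0 := by
      refine Finset.sum_eq_zero fun i hi => ?_
      rcases hlam01 i with h | h
      · exact h
      · exact absurd h (Finset.mem_filter.mp hi).2
    rw [e1, e2, add_zero]
  have hcard : (Finset.univ.filter (fun i => lam i = 1)).card = 1 := by
    have := htr' ▸ hsum
    exact_mod_cast this.symm
  obtain ⟨i0, hi0⟩ := Finset.card_eq_one.mp hcard
  have hl1 : lam i0 = 1 := by
    have : i0 ∈ Finset.univ.filter (fun i => lam i = 1) := hi0 ▸ Finset.mem_singleton_self i0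
    exact (Finset.mem_filter.mp this).2
  have hl0 : ∀ i, i ≠ i0 → lam i = 0 := by
    intro i hne
    rcases hlam01 i with h | h
    · exact h
    · exact absurd (hi0 ▸ Finset.mem_filter.mpr ⟨Finset.mem_univ i, h⟩ :
        i ∈ ({i0} : Finset n)) (by simpa using hne)
  have hl1' : hH.eigenvalues i0 = 1 := by rw [← hlam]; exact hl1
  have hl0' : ∀ i, i ≠ i0 → hH.eigenvalues i = 0 := by
    intro i hi; rw [← hlam]; exact hl0 i hi
  refine ⟨fun y => (U : Matrix n n ℂ) y i0, fun y z => ?_, ?_⟩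
  · conv_lhs => rw [hspec]
    rw [uApply]
    rw [Finset.sum_eq_single i0]
    · rw [hl1']; push_cast; ring_nf; rfl
    · intro i _ hne
      rw [hl0' i hne]; push_cast; ring
    · intro h; exact absurd (Finset.mem_univ i0) h
  · have h1 : (star (U : Matrix n n ℂ) * (U : Matrix n n ℂ)) i0 i0 = 1 := by
      rw [star_mul_u]; simp
    rw [Matrix.mul_apply] at h1
    rw [← h1]
    exact Finset.sum_congr rfl fun y _ => rfl

lemma uSmul (c : ℂ) (V : Matrix.unitaryGroup n ℂ) (d : n → ℂ) :
    c • ((V : Matrix n n ℂ) * diagonal d * star (V : Matrix n n ℂ))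
      = (V : Matrix n n ℂ) * diagonal (fun i => c * d i) * star (V : Matrix n n ℂ) := by
  rw [show (fun i => c * d i) = c • d from rfl, Matrix.diagonal_smul, mul_smul_comm,
    Matrix.smul_mul]

lemma conjApply (V : Matrix n n ℂ) (d : n → ℂ) (y z : n) :
    (V * diagonal d * star V) y z = ∑ i, V y i * d i * star (V z i) := by
  rw [Matrix.mul_apply]
  refine Finset.sum_congr rfl fun i _ => ?_
  rw [Matrix.mul_diagonal]
  rfl

lemma neg_mul_logb_le_two {x : ℝ} (hx : 0 ≤ x) : -(x * Real.logb 2 x) ≤ 2 := by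
  rcases eq_or_lt_of_le hx with h | h
  · simp [← h]
  have hlog : -(x * Real.log x) ≤ 1 := by
    have h1 : Real.log x⁻¹ ≤ x⁻¹ - 1 := Real.log_le_sub_one_of_pos (by positivity)
    rw [Real.log_inv] at h1
    have h2 : -(x * Real.log x) ≤ x * (x⁻¹ - 1) := by
      have := mul_le_mul_of_nonneg_left h1 hx
      nlinarith
    have h3 : x * (x⁻¹ - 1) = 1 - x := by field_simp
    nlinarith
  have hl2 : (0.6931471803 : ℝ) < Real.log 2 := Real.log_two_gt_d9
  rw [Real.logb, div_eq_mul_inv]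
  have : -(x * (Real.log x * (Real.log 2)⁻¹)) = (-(x * Real.log x)) * (Real.log 2)⁻¹ := by ring
  rw [this]
  have hinv : (0:ℝ) < (Real.log 2)⁻¹ := by positivity
  calc (-(x * Real.log x)) * (Real.log 2)⁻¹ ≤ 1 * (Real.log 2)⁻¹ :=
        mul_le_mul_of_nonneg_right hlog (le_of_lt hinv)
    _ = (Real.log 2)⁻¹ := one_mul _
    _ ≤ 2 := by
        rw [inv_le_comm₀ (by linarith) (by norm_num)]
        linarith

lemma ptraceB_isHermitian {N : Matrix (a × b) (a × b) ℂ} (hN : N.IsHermitian) :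
    (ptraceB N).IsHermitian := by
  ext i j
  simp only [Matrix.conjTranspose_apply, ptraceB, star_sum]
  exact Finset.sum_congr rfl fun y _ => hN.apply (i, y) (j, y)

lemma ptraceB_posSemidef {N : Matrix (a × b) (a × b) ℂ} (hN : N.PosSemidef) :
    (ptraceB N).PosSemidef := by
  refine Matrix.PosSemidef.of_dotProduct_mulVec_nonneg (ptraceB_isHermitian hN.1) fun x => ?_
  have key : (star x) ⬝ᵥ (ptraceB N *ᵥ x)
      = ∑ y : b, (star (fun p : a × b => if p.2 = y then x p.1 else 0)) ⬝ᵥ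
          (N *ᵥ (fun p : a × b => if p.2 = y then x p.1 else 0)) := by
    have rhs : ∀ y : b, (star (fun p : a × b => if p.2 = y then x p.1 else 0)) ⬝ᵥ
        (N *ᵥ (fun p : a × b => if p.2 = y then x p.1 else 0))
        = ∑ i, ∑ j, star (x i) * (N (i, y) (j, y) * x j) := by
      intro y
      simp only [dotProduct, Matrix.mulVec, dotProduct, Pi.star_apply,
        Fintype.sum_prod_type, mul_ite, mul_zero, Finset.sum_ite_eq', Finset.mem_univ, if_true,
        apply_ite (star : ℂ → ℂ), star_zero, ite_mul, zero_mul]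
      refine Finset.sum_congr rfl fun i _ => ?_
      rw [Finset.mul_sum]
    have gen : ∀ F : a → a → b → ℂ,
        (∑ i, ∑ j, ∑ y, F i j y) = ∑ y, ∑ i, ∑ j, F i j y := by
      intro F
      have h1 : (∑ i, ∑ j, ∑ y, F i j y) = ∑ i, ∑ y, ∑ j, F i j y :=
        Finset.sum_congr rfl fun i _ => Finset.sum_comm
      rw [h1, Finset.sum_comm]
    calc (star x) ⬝ᵥ (ptraceB N *ᵥ x)
        = ∑ i, ∑ j, ∑ y, star (x i) * (N (i, y) (j, y) * x j) := by
          simp only [dotProduct, Matrix.mulVec, ptraceB, Pi.star_apply, Finset.mul_sum,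
            Finset.sum_mul]
          try refine Finset.sum_congr rfl fun i _ => Finset.sum_congr rfl fun j _ =>
            Finset.sum_congr rfl fun y _ => by ring
      _ = ∑ y, ∑ i, ∑ j, star (x i) * (N (i, y) (j, y) * x j) := gen _
      _ = _ := Finset.sum_congr rfl fun y _ => (rhs y).symm
  rw [key]
  exact Finset.sum_nonneg fun y _ => hN.dotProduct_mulVec_nonneg _

lemma ptraceA_isHermitian {N : Matrix (a × b) (a × b) ℂ} (hN : N.IsHermitian) :
    (ptraceA N).IsHermitian := by
  ext i j
  simp only [Matrix.conjTranspose_apply, ptraceA, star_sum]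
  exact Finset.sum_congr rfl fun x _ => hN.apply (x, i) (x, j)

lemma kron_one_apply (B : Matrix b b ℂ) (p q : a × b) :
    ((1 : Matrix a a ℂ) ⊗ₖ B) p q = if p.1 = q.1 then B p.2 q.2 else 0 := by
  rcases p with ⟨i, y⟩; rcases q with ⟨j, z⟩
  simp only [Matrix.kroneckerMap_apply, Matrix.one_apply, ite_mul, one_mul, zero_mul]

lemma kron_one_conjTranspose {B : Matrix b b ℂ} (hB : B.IsHermitian) :
    ((1 : Matrix a a ℂ) ⊗ₖ B)ᴴ = (1 : Matrix a a ℂ) ⊗ₖ B := by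
  ext p q
  rw [Matrix.conjTranspose_apply, kron_one_apply, kron_one_apply]
  rcases eq_or_ne p.1 q.1 with h | h
  · rw [if_pos h, if_pos h.symm]
    exact hB.apply p.2 q.2
  · rw [if_neg h, if_neg (Ne.symm h), star_zero]

lemma mulkron_apply (B : Matrix b b ℂ) (ρ : Matrix (a × b) (a × b) ℂ) (p : a × b) (q : a × b) :
    (((1 : Matrix a a ℂ) ⊗ₖ B) * ρ) p q = ∑ y, B p.2 y * ρ (p.1, y) q := by
  rw [Matrix.mul_apply, Fintype.sum_prod_type]
  simp only [kron_one_apply, ite_mul, zero_mul]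
  have step : ∀ x : a, (∑ y : b, if p.1 = x then B p.2 y * ρ (x, y) q else 0)
      = if p.1 = x then ∑ y : b, B p.2 y * ρ (x, y) q else 0 := by
    intro x; split <;> simp
  simp only [step]
  rw [Finset.sum_ite_eq (Finset.univ : Finset a) p.1 (fun x => ∑ y, B p.2 y * ρ (x, y) q)]
  simp

lemma sandwich_apply (B : Matrix b b ℂ) (ρ : Matrix (a × b) (a × b) ℂ) (p q : a × b) :
    (((1 : Matrix a a ℂ) ⊗ₖ B) * ρ * ((1 : Matrix a a ℂ) ⊗ₖ B)) p q
      = ∑ y, ∑ z, B p.2 y * ρ (p.1, y) (q.1, z) * B z q.2 := by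
  rw [Matrix.mul_apply]
  rw [Fintype.sum_prod_type]
  have inner : ∀ j : a, ∀ z : b, (((1 : Matrix a a ℂ) ⊗ₖ B) * ρ) p (j, z) * ((1 : Matrix a a ℂ) ⊗ₖ B) (j, z) q
      = if j = q.1 then ∑ y, B p.2 y * ρ (p.1, y) (j, z) * B z q.2 else 0 := by
    intro j z
    rw [mulkron_apply, kron_one_apply]
    split
    · rw [Finset.sum_mul]
    · rw [mul_zero]
  simp only [inner]
  have step : ∀ x : a, (∑ z : b, if x = q.1 then ∑ y, B p.2 y * ρ (p.1, y) (x, z) * B z q.2 else 0)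
      = if x = q.1 then ∑ z : b, ∑ y, B p.2 y * ρ (p.1, y) (x, z) * B z q.2 else 0 := by
    intro x; split <;> simp
  simp only [step]
  rw [Finset.sum_ite_eq' (Finset.univ : Finset a) q.1
    (fun x => ∑ z, ∑ y, B p.2 y * ρ (p.1, y) (x, z) * B z q.2)]
  simp only [Finset.mem_univ, if_true]
  rw [Finset.sum_comm]

lemma trace_mulkron (B : Matrix b b ℂ) (ρ : Matrix (a × b) (a × b) ℂ) :
    (((1 : Matrix a a ℂ) ⊗ₖ B) * ρ).trace = (B * ptraceA ρ).trace := by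
  rw [Matrix.trace, Matrix.trace, Fintype.sum_prod_type]
  simp only [Matrix.diag_apply, mulkron_apply]
  have rhs : ∀ w : b, (B * ptraceA ρ) w w = ∑ y, ∑ i, B w y * ρ (i, y) (i, w) := by
    intro w
    rw [Matrix.mul_apply]
    refine Finset.sum_congr rfl fun y _ => ?_
    rw [show ptraceA ρ y w = ∑ i, ρ (i, y) (i, w) from rfl, Finset.mul_sum]
  simp only [rhs]
  rw [Finset.sum_comm]
  exact Finset.sum_congr rfl fun w _ => Finset.sum_comm

lemma bigW_mem (v : b → b → ℂ)
    (hv : ∀ j k, (∑ y, star (v j y) * v k y) = if j = k then (1 : ℂ) else 0)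
    (uu : b → Matrix.unitaryGroup a ℂ) :
    (Matrix.of fun (p q : a × b) => (uu q.2 : Matrix a a ℂ) p.1 q.1 * v q.2 p.2) ∈
      Matrix.unitaryGroup (a × b) ℂ := by
  rw [Matrix.mem_unitaryGroup_iff']
  ext ⟨j, k⟩ ⟨j', k'⟩
  rw [Matrix.mul_apply]
  have expand : ∀ p : a × b,
      (star (Matrix.of fun (p q : a × b) => (uu q.2 : Matrix a a ℂ) p.1 q.1 * v q.2 p.2)) (j, k) p *
        (Matrix.of fun (p q : a × b) => (uu q.2 : Matrix a a ℂ) p.1 q.1 * v q.2 p.2) p (j', k')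
      = (star ((uu k : Matrix a a ℂ) p.1 j) * (uu k' : Matrix a a ℂ) p.1 j') *
          (star (v k p.2) * v k' p.2) := by
    intro p
    rw [Matrix.star_apply, Matrix.of_apply, Matrix.of_apply, star_mul']
    ring
  simp only [expand]
  rw [Fintype.sum_prod_type]
  have hfact := Finset.sum_mul_sum (Finset.univ : Finset a) (Finset.univ : Finset b)
      (fun i => star ((uu k : Matrix a a ℂ) i j) * (uu k' : Matrix a a ℂ) i j')
      (fun y => star (v k y) * v k' y)
  rw [← hfact, hv]
  by_cases hkk : k = k'
  · subst hkk
    rw [if_pos rfl, mul_one]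
    have hmm : ∑ i, star ((uu k : Matrix a a ℂ) i j) * (uu k : Matrix a a ℂ) i j'
        = (star (uu k : Matrix a a ℂ) * (uu k : Matrix a a ℂ)) j j' := by
      rw [Matrix.mul_apply]
      exact Finset.sum_congr rfl fun i _ => rfl
    rw [hmm, star_mul_u]
    by_cases hjj : j = j'
    · subst hjj; simp [Matrix.one_apply]
    · simp [Matrix.one_apply, hjj, Prod.ext_iff]
  · rw [if_neg hkk, mul_zero]
    rw [Matrix.one_apply_ne (by simp [Prod.ext_iff, hkk])]

lemma exists_meas (ρB : Matrix b b ℂ) (hH : ρB.IsHermitian) :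
    ∃ P : b → Matrix b b ℂ, IsRankOneMeas P ∧ Invariant P ρB := by
  classical
  set U := hH.eigenvectorUnitary with hU
  set P : b → Matrix b b ℂ :=
    fun k => Matrix.of fun y z => (U : Matrix b b ℂ) y k * star ((U : Matrix b b ℂ) z k) with hPdef
  have hcol : ∀ j k : b, (∑ w, star ((U : Matrix b b ℂ) w j) * (U : Matrix b b ℂ) w k)
      = if j = k then (1 : ℂ) else 0 := by
    intro j k
    have h1 : (star (U : Matrix b b ℂ) * (U : Matrix b b ℂ)) j k
        = ∑ w, star ((U : Matrix b b ℂ) w j) * (U : Matrix b b ℂ) w k := by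
      rw [Matrix.mul_apply]
      exact Finset.sum_congr rfl fun w _ => rfl
    rw [← h1, star_mul_u, Matrix.one_apply]
  have hrow : ∀ y z : b, (∑ k, (U : Matrix b b ℂ) y k * star ((U : Matrix b b ℂ) z k))
      = if y = z then (1 : ℂ) else 0 := by
    intro y z
    have h1 : ((U : Matrix b b ℂ) * star (U : Matrix b b ℂ)) y z
        = ∑ k, (U : Matrix b b ℂ) y k * star ((U : Matrix b b ℂ) z k) := by
      rw [Matrix.mul_apply]
      exact Finset.sum_congr rfl fun w _ => rfl
    rw [← h1, u_mul_star, Matrix.one_apply]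
  have hmul : ∀ j k, P j * P k = if j = k then P k else 0 := by
    intro j k
    ext y z
    rw [Matrix.mul_apply]
    have : ∀ w, P j y w * P k w z
        = ((U : Matrix b b ℂ) y j * star ((U : Matrix b b ℂ) z k)) *
            (star ((U : Matrix b b ℂ) w j) * (U : Matrix b b ℂ) w k) := by
      intro w
      simp only [hPdef, Matrix.of_apply]
      ring
    simp only [this]
    rw [← Finset.mul_sum, hcol]
    by_cases hjk : j = k
    · subst hjk
      simp [hPdef]
    · simp [hjk, Matrix.zero_apply]
  refine ⟨P, ⟨⟨fun k => ?_, fun j k => by rw [hmul j k]; congr, ?_⟩, fun k => ?_⟩, ?_⟩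
  · -- Hermitian
    ext y z
    simp only [Matrix.conjTranspose_apply, hPdef, Matrix.of_apply, star_mul', star_star]
    ring
  · -- sum to 1
    ext y z
    rw [Matrix.sum_apply]
    simp only [hPdef, Matrix.of_apply]
    rw [hrow, Matrix.one_apply]
  · -- trace
    rw [Matrix.trace]
    simp only [Matrix.diag_apply, hPdef, Matrix.of_apply]
    have h2 : (∑ w, star ((U : Matrix b b ℂ) w k) * (U : Matrix b b ℂ) w k) = 1 := by
      rw [hcol k k, if_pos rfl]
    rw [← h2]
    exact Finset.sum_congr rfl fun w _ => by ring
  · -- invariant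
    have hdiagU : star (U : Matrix b b ℂ) * ρB * (U : Matrix b b ℂ)
        = diagonal (fun i => ((hH.eigenvalues i : ℝ) : ℂ)) := by
      conv_lhs => rw [spectral_decomp hH]
      rw [← hU]
      calc star (U : Matrix b b ℂ) * ((U : Matrix b b ℂ) *
            diagonal (fun i => ((hH.eigenvalues i : ℝ) : ℂ)) * star (U : Matrix b b ℂ)) *
            (U : Matrix b b ℂ)
          = (star (U : Matrix b b ℂ) * (U : Matrix b b ℂ)) *
              diagonal (fun i => ((hH.eigenvalues i : ℝ) : ℂ)) *
              (star (U : Matrix b b ℂ) * (U : Matrix b b ℂ)) := by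
            simp only [Matrix.mul_assoc]
        _ = diagonal (fun i => ((hH.eigenvalues i : ℝ) : ℂ)) := by
            rw [star_mul_u]; simp
    unfold Invariant
    ext y z
    rw [Matrix.sum_apply]
    have hterm : ∀ k, (P k * ρB * P k) y z
        = ((U : Matrix b b ℂ) y k * star ((U : Matrix b b ℂ) z k)) *
            ((hH.eigenvalues k : ℝ) : ℂ) := by
      intro k
      have entry : (P k * ρB * P k) y z
          = ((U : Matrix b b ℂ) y k * star ((U : Matrix b b ℂ) z k)) *
              ∑ y', ∑ z', star ((U : Matrix b b ℂ) y' k) * ρB y' z' * (U : Matrix b b ℂ) z' k := by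
        rw [Matrix.mul_apply]
        have inner : ∀ w, (P k * ρB) y w * P k w z
            = ∑ y', ((U : Matrix b b ℂ) y k * star ((U : Matrix b b ℂ) z k)) *
                (star ((U : Matrix b b ℂ) y' k) * ρB y' w * (U : Matrix b b ℂ) w k) := by
          intro w
          rw [Matrix.mul_apply, Finset.sum_mul]
          refine Finset.sum_congr rfl fun y' _ => ?_
          simp only [hPdef, Matrix.of_apply]
          ring
        simp only [inner]
        rw [Finset.sum_comm, Finset.mul_sum]
        refine Finset.sum_congr rfl fun y' _ => ?_
        rw [Finset.mul_sum]
      rw [entry]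
      congr 1
      have hmm : (star (U : Matrix b b ℂ) * ρB * (U : Matrix b b ℂ)) k k
          = ∑ z', ∑ y', star ((U : Matrix b b ℂ) y' k) * ρB y' z' * (U : Matrix b b ℂ) z' k := by
        rw [Matrix.mul_apply]
        refine Finset.sum_congr rfl fun z' _ => ?_
        rw [Matrix.mul_apply, Finset.sum_mul]
        exact Finset.sum_congr rfl fun y' _ => rfl
      rw [Finset.sum_comm, ← hmm, hdiagU, diagonal_apply_eq]
    simp only [hterm]
    have final : (∑ k, ((U : Matrix b b ℂ) y k * star ((U : Matrix b b ℂ) z k)) *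
        ((hH.eigenvalues k : ℝ) : ℂ))
        = ((U : Matrix b b ℂ) * diagonal (fun i => ((hH.eigenvalues i : ℝ) : ℂ)) *
            star (U : Matrix b b ℂ)) y z := by
      rw [conjApply]
      exact Finset.sum_congr rfl fun k _ => by ring
    rw [final, ← spectral_decomp hH]

lemma bigW_conj (v : b → b → ℂ) (uu : b → Matrix.unitaryGroup a ℂ) (c : b → a → ℝ)
    (p q : a × b) :
    ((Matrix.of fun (p q : a × b) => (uu q.2 : Matrix a a ℂ) p.1 q.1 * v q.2 p.2) *
      diagonal (fun r : a × b => ((c r.2 r.1 : ℝ) : ℂ)) *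
      star (Matrix.of fun (p q : a × b) => (uu q.2 : Matrix a a ℂ) p.1 q.1 * v q.2 p.2)) p q
    = ∑ k, ((uu k : Matrix a a ℂ) * diagonal (fun l => ((c k l : ℝ) : ℂ)) *
        star (uu k : Matrix a a ℂ)) p.1 q.1 * (v k p.2 * star (v k q.2)) := by
  rw [conjApply, Fintype.sum_prod_type, Finset.sum_comm]
  refine Finset.sum_congr rfl fun k _ => ?_
  rw [conjApply, Finset.sum_mul]
  refine Finset.sum_congr rfl fun l _ => ?_
  simp only [Matrix.of_apply, star_mul']
  ring

lemma key (ρ : Matrix (a × b) (a × b) ℂ) (hρ : IsDensity ρ)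
    (P : b → Matrix b b ℂ) (hP : IsRankOneMeas P) (hInv : Invariant P (ptraceA ρ)) :
    relEntropy ρ (postMeas P ρ) =
      (vnEntropy (ptraceA ρ) + ∑ k, probOf P ρ k * vnEntropy (condA P ρ k)) - vnEntropy ρ ∧
    relEntropy ρ (postMeas P ρ) ≤ 2 * (Fintype.card (a × b)) - vnEntropy ρ := by
  classical
  obtain ⟨⟨hPH, hPmul, hPsum⟩, hPtr⟩ := hP
  have hρH : ρ.IsHermitian := hρ.1.1
  -- extract unit vectors
  have hvex : ∀ k, ∃ w : b → ℂ,
      (∀ y z, P k y z = w y * star (w z)) ∧ (∑ y, star (w y) * w y) = 1 := by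
    intro k
    refine rankone_vec (hPH k) ?_ (hPtr k)
    have := hPmul k k
    rwa [if_pos rfl] at this
  choose v hv hvnorm using hvex
  -- orthonormality
  have hon : ∀ j k, (∑ y, star (v j y) * v k y) = if j = k then (1 : ℂ) else 0 := by
    intro j k
    by_cases h : j = k
    · subst h; rw [hvnorm j, if_pos rfl]
    · rw [if_neg h]
      have h0 : P j * P k = 0 := by
        have := hPmul j k; rwa [if_neg h] at this
      have hj : ∃ y, v j y ≠ 0 := by
        by_contra hc
        push_neg at hc
        have := hvnorm j
        simp only [hc, mul_zero, Finset.sum_const_zero] at this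
        exact zero_ne_one this
      have hk : ∃ y, v k y ≠ 0 := by
        by_contra hc
        push_neg at hc
        have := hvnorm k
        simp only [hc, mul_zero, Finset.sum_const_zero] at this
        exact zero_ne_one this
      obtain ⟨y0, hy0⟩ := hj
      obtain ⟨z0, hz0⟩ := hk
      have hentry : (∑ w, P j y0 w * P k w z0) = 0 := by
        have h := congrFun (congrFun h0 y0) z0
        rw [Matrix.mul_apply] at h
        simpa using h
      have hfac : (v j y0 * star (v k z0)) * (∑ w, star (v j w) * v k w) = 0 := by
        calc (v j y0 * star (v k z0)) * (∑ w, star (v j w) * v k w)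
            = ∑ w, P j y0 w * P k w z0 := by
              rw [Finset.mul_sum]
              refine Finset.sum_congr rfl fun w _ => ?_
              rw [hv j y0 w, hv k w z0]
              ring
          _ = 0 := hentry
      rcases mul_eq_zero.mp hfac with h1 | h1
      · rcases mul_eq_zero.mp h1 with h2 | h2
        · exact absurd h2 hy0
        · exact absurd h2 (star_ne_zero.mpr hz0)
      · exact h1
  -- N and M
  set Nm : b → Matrix (a × b) (a × b) ℂ :=
    fun k => ((1 : Matrix a a ℂ) ⊗ₖ P k) * ρ * ((1 : Matrix a a ℂ) ⊗ₖ P k) with hNm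
  set Mm : b → Matrix a a ℂ := fun k => ptraceB (Nm k) with hMm
  have hkronH : ∀ k, ((1 : Matrix a a ℂ) ⊗ₖ P k)ᴴ = (1 : Matrix a a ℂ) ⊗ₖ P k :=
    fun k => kron_one_conjTranspose (hPH k)
  have hNpsd : ∀ k, (Nm k).PosSemidef := by
    intro k
    have := hρ.1.mul_mul_conjTranspose_same ((1 : Matrix a a ℂ) ⊗ₖ P k)
    rwa [hkronH k] at this
  have hMpsd : ∀ k, (Mm k).PosSemidef := fun k => ptraceB_posSemidef (hNpsd k)
  have hMH : ∀ k, (Mm k).IsHermitian := fun k => (hMpsd k).1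
  set E : b → a → ℝ := fun k => (hMH k).eigenvalues with hE
  set uu : b → Matrix.unitaryGroup a ℂ := fun k => (hMH k).eigenvectorUnitary with huu
  have hMdec : ∀ k, Mm k = (uu k : Matrix a a ℂ) * diagonal (fun l => ((E k l : ℝ) : ℂ)) *
      star (uu k : Matrix a a ℂ) := fun k => spectral_decomp (hMH k)
  have hEnn : ∀ k l, 0 ≤ E k l := fun k l => (hMpsd k).eigenvalues_nonneg l
  -- N = M ⊗ rank-one
  have hNent : ∀ k (p q : a × b),
      Nm k p q = Mm k p.1 q.1 * (v k p.2 * star (v k q.2)) := by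
    intro k p q
    have hc : ∀ (i j : a), ∀ w w' : b, P k w w' = v k w * star (v k w') := fun _ _ => hv k
    have hNc : ∀ (p q : a × b), Nm k p q
        = (v k p.2 * star (v k q.2)) *
            ∑ y, ∑ z, star (v k y) * ρ (p.1, y) (q.1, z) * v k z := by
      intro p q
      rw [hNm]
      show (((1 : Matrix a a ℂ) ⊗ₖ P k) * ρ * ((1 : Matrix a a ℂ) ⊗ₖ P k)) p q = _
      rw [sandwich_apply]
      rw [Finset.mul_sum]
      refine Finset.sum_congr rfl fun y _ => ?_
      rw [Finset.mul_sum]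
      refine Finset.sum_congr rfl fun z _ => ?_
      rw [hv k p.2 y, hv k z q.2]
      ring
    have hMc : Mm k p.1 q.1 = ∑ y, ∑ z, star (v k y) * ρ (p.1, y) (q.1, z) * v k z := by
      rw [hMm]
      show ∑ w, Nm k (p.1, w) (q.1, w) = _
      have : ∀ w, Nm k (p.1, w) (q.1, w)
          = (v k w * star (v k w)) * ∑ y, ∑ z, star (v k y) * ρ (p.1, y) (q.1, z) * v k z :=
        fun w => hNc (p.1, w) (q.1, w)
      simp only [this]
      rw [← Finset.sum_mul]
      have hnorm1 : (∑ w, v k w * star (v k w)) = 1 := by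
        rw [← hvnorm k]
        exact Finset.sum_congr rfl fun w _ => mul_comm _ _
      rw [hnorm1, one_mul]
    rw [hNc p q, hMc]
    ring
  -- trace facts
  have hkronsq : ∀ k, ((1 : Matrix a a ℂ) ⊗ₖ P k) * ((1 : Matrix a a ℂ) ⊗ₖ P k)
      = (1 : Matrix a a ℂ) ⊗ₖ P k := by
    intro k
    have hPP : P k * P k = P k := by
      have := hPmul k k; rwa [if_pos rfl] at this
    rw [← Matrix.mul_kronecker_mul, one_mul, hPP]
  have htrN : ∀ k, (Nm k).trace = (((1 : Matrix a a ℂ) ⊗ₖ P k) * ρ).trace := by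
    intro k
    rw [hNm]
    show (((1 : Matrix a a ℂ) ⊗ₖ P k) * ρ * ((1 : Matrix a a ℂ) ⊗ₖ P k)).trace = _
    rw [Matrix.trace_mul_cycle, hkronsq k]
  have htrM : ∀ k, (Mm k).trace = (Nm k).trace := by
    intro k
    rw [Matrix.trace, Matrix.trace, Fintype.sum_prod_type]
    rfl
  have htrME : ∀ k, (Mm k).trace = ((∑ l, E k l : ℝ) : ℂ) := by
    intro k
    rw [hMdec k, uTrace]
    push_cast
    rfl
  have hprobE : ∀ k, probOf P ρ k = ∑ l, E k l := by
    intro k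
    rw [probOf, ← htrN k, ← htrM k, htrME k, Complex.ofReal_re]
  have hprobC : ∀ k, (((1 : Matrix a a ℂ) ⊗ₖ P k) * ρ).trace = ((probOf P ρ k : ℝ) : ℂ) := by
    intro k
    rw [← htrN k, ← htrM k, htrME k, hprobE k]
  have hprobnn : ∀ k, 0 ≤ probOf P ρ k := by
    intro k
    rw [hprobE k]
    exact Finset.sum_nonneg fun l _ => hEnn k l
  -- big unitary and decomposition of σ
  set W : Matrix (a × b) (a × b) ℂ :=
    Matrix.of fun (p q : a × b) => (uu q.2 : Matrix a a ℂ) p.1 q.1 * v q.2 p.2 with hWdef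
  set Wu : Matrix.unitaryGroup (a × b) ℂ := ⟨W, bigW_mem v hon uu⟩ with hWu
  have hWcoe : (Wu : Matrix (a × b) (a × b) ℂ) = W := rfl
  have hσdec : postMeas P ρ = (Wu : Matrix (a × b) (a × b) ℂ) *
      diagonal (fun r : a × b => ((E r.2 r.1 : ℝ) : ℂ)) * star (Wu : Matrix (a × b) (a × b) ℂ) := by
    ext p q
    rw [hWcoe, hWdef]
    rw [bigW_conj v uu E p q]
    rw [postMeas, Matrix.sum_apply]
    refine Finset.sum_congr rfl fun k _ => ?_
    rw [← hMdec k]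
    exact hNent k p q
  -- entropy of sigma
  have hSσ : vnEntropy (postMeas P ρ) = -∑ r : a × b, E r.2 r.1 * Real.logb 2 (E r.2 r.1) :=
    vnEntropy_of_decomp _ Wu (fun r => E r.2 r.1) hσdec
  -- rho_B decomposition
  have hρBH : (ptraceA ρ).IsHermitian := ptraceA_isHermitian hρH
  set Vb : Matrix b b ℂ := Matrix.of fun y k => v k y with hVbdef
  have hVbmem : Vb ∈ Matrix.unitaryGroup b ℂ := by
    rw [Matrix.mem_unitaryGroup_iff']
    ext j k
    rw [Matrix.mul_apply]
    have hterm : ∀ y, (star Vb) j y * Vb y k = star (v j y) * v k y := by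
      intro y; rw [Matrix.star_apply]; rfl
    simp only [hterm]
    rw [hon j k, Matrix.one_apply]
  set Vbu : Matrix.unitaryGroup b ℂ := ⟨Vb, hVbmem⟩ with hVbu
  have hVbcoe : (Vbu : Matrix b b ℂ) = Vb := rfl
  have hρBdec : ptraceA ρ = (Vbu : Matrix b b ℂ) *
      diagonal (fun k => ((probOf P ρ k : ℝ) : ℂ)) * star (Vbu : Matrix b b ℂ) := by
    ext y z
    have rhs : ((Vbu : Matrix b b ℂ) * diagonal (fun k => ((probOf P ρ k : ℝ) : ℂ)) *
        star (Vbu : Matrix b b ℂ)) y z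
        = ∑ k, (v k y * star (v k z)) * ((probOf P ρ k : ℝ) : ℂ) := by
      rw [conjApply]
      refine Finset.sum_congr rfl fun k _ => ?_
      rw [hVbcoe, hVbdef]
      simp only [Matrix.of_apply]
      ring
    rw [rhs]
    conv_lhs => rw [← hInv]
    rw [Matrix.sum_apply]
    refine Finset.sum_congr rfl fun k _ => ?_
    have hck : (∑ y', ∑ z', star (v k y') * ptraceA ρ y' z' * v k z')
        = ((probOf P ρ k : ℝ) : ℂ) := by
      rw [← hprobC k, trace_mulkron, Matrix.trace]
      have rhs2 : ∀ w : b, (P k * ptraceA ρ).diag w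
          = ∑ y', (v k w * star (v k y')) * ptraceA ρ y' w := by
        intro w
        show (P k * ptraceA ρ) w w = _
        rw [Matrix.mul_apply]
        exact Finset.sum_congr rfl fun y' _ => by rw [hv k w y']
      simp only [rhs2]
      rw [Finset.sum_comm]
      exact Finset.sum_congr rfl fun y' _ => Finset.sum_congr rfl fun w _ => by ring
    have entry : (P k * ptraceA ρ * P k) y z
        = (v k y * star (v k z)) * ∑ y', ∑ z', star (v k y') * ptraceA ρ y' z' * v k z' := by
      rw [Matrix.mul_apply]
      have inner : ∀ w, (P k * ptraceA ρ) y w * P k w z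
          = ∑ y', (v k y * star (v k z)) * (star (v k y') * ptraceA ρ y' w * v k w) := by
        intro w
        rw [Matrix.mul_apply, Finset.sum_mul]
        refine Finset.sum_congr rfl fun y' _ => ?_
        rw [hv k y y', hv k w z]
        ring
      simp only [inner]
      rw [Finset.sum_comm, Finset.mul_sum]
      refine Finset.sum_congr rfl fun y' _ => ?_
      rw [Finset.mul_sum]
    rw [entry, hck]
  have hSB : vnEntropy (ptraceA ρ) = -∑ k, probOf P ρ k * Real.logb 2 (probOf P ρ k) :=
    vnEntropy_of_decomp _ Vbu _ hρBdec
  -- conditional entropy identity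
  have hcond : ∀ k, probOf P ρ k * vnEntropy (condA P ρ k)
      = -∑ l, E k l * Real.logb 2 (E k l)
        + probOf P ρ k * Real.logb 2 (probOf P ρ k) := by
    intro k
    by_cases hp : probOf P ρ k = 0
    · have hE0 : ∀ l, E k l = 0 := by
        have hsum0 : ∑ l, E k l = 0 := by rw [← hprobE k, hp]
        intro l
        exact (Finset.sum_eq_zero_iff_of_nonneg (fun l _ => hEnn k l)).mp hsum0 l
          (Finset.mem_univ l)
      simp [hp, hE0]
    · have hcd : condA P ρ k = (uu k : Matrix a a ℂ) *
          diagonal (fun l => ((E k l / probOf P ρ k : ℝ) : ℂ)) * star (uu k : Matrix a a ℂ) := by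
        unfold condA
        rw [hprobC k]
        have hMmk : ptraceB (((1 : Matrix a a ℂ) ⊗ₖ P k) * ρ * ((1 : Matrix a a ℂ) ⊗ₖ P k))
            = Mm k := rfl
        rw [hMmk, hMdec k, ← Complex.ofReal_inv, uSmul]
        congr 1
        congr 1
        funext l
        push_cast
        field_simp
      have hvc : vnEntropy (condA P ρ k)
          = -∑ l, (E k l / probOf P ρ k) * Real.logb 2 (E k l / probOf P ρ k) :=
        vnEntropy_of_decomp _ (uu k) _ hcd
      rw [hvc]
      have perl : ∀ l, probOf P ρ k * ((E k l / probOf P ρ k) * Real.logb 2 (E k l / probOf P ρ k))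
          = E k l * Real.logb 2 (E k l) - E k l * Real.logb 2 (probOf P ρ k) := by
        intro l
        by_cases hE : E k l = 0
        · simp [hE]
        · rw [Real.logb_div hE hp]
          field_simp
      rw [mul_neg, Finset.mul_sum]
      rw [Finset.sum_congr rfl fun l _ => perl l]
      rw [Finset.sum_sub_distrib, ← Finset.sum_mul, ← hprobE k]
      ring
  -- matLog pinching
  have hL : matLog (postMeas P ρ) = (Wu : Matrix (a × b) (a × b) ℂ) *
      diagonal (fun r : a × b => ((Real.logb 2 (E r.2 r.1) : ℝ) : ℂ)) *
      star (Wu : Matrix (a × b) (a × b) ℂ) :=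
    matLog_of_decomp _ Wu _ hσdec
  set Lk : b → Matrix a a ℂ := fun k => (uu k : Matrix a a ℂ) *
      diagonal (fun l => ((Real.logb 2 (E k l) : ℝ) : ℂ)) * star (uu k : Matrix a a ℂ) with hLkdef
  have hLsum : matLog (postMeas P ρ) = ∑ k, Lk k ⊗ₖ P k := by
    ext p q
    rw [hL, hWcoe, hWdef, bigW_conj v uu (fun k l => Real.logb 2 (E k l)) p q]
    rw [Matrix.sum_apply]
    refine Finset.sum_congr rfl fun k _ => ?_
    rw [Matrix.kroneckerMap_apply, hv k p.2 q.2]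
  have hPP : ∀ j, P j * P j = P j := by
    intro j
    have := hPmul j j; rwa [if_pos rfl] at this
  have hpinch : ∀ j, ((1 : Matrix a a ℂ) ⊗ₖ P j) * matLog (postMeas P ρ) *
      ((1 : Matrix a a ℂ) ⊗ₖ P j) = Lk j ⊗ₖ P j := by
    intro j
    rw [hLsum, Finset.mul_sum, Finset.sum_mul]
    rw [Finset.sum_eq_single j]
    · rw [← Matrix.mul_kronecker_mul, ← Matrix.mul_kronecker_mul, one_mul, mul_one,
        hPP j, hPP j]
    · intro k _ hkj
      have h0 : P j * P k = 0 := by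
        have := hPmul j k; rwa [if_neg (Ne.symm hkj)] at this
      rw [← Matrix.mul_kronecker_mul, ← Matrix.mul_kronecker_mul, h0, Matrix.zero_mul,
        Matrix.kronecker_zero]
    · intro h; exact absurd (Finset.mem_univ j) h
  -- trace equality (pinching)
  have htreq : ((postMeas P ρ) * matLog (postMeas P ρ)).trace
      = (ρ * matLog (postMeas P ρ)).trace := by
    have hσsum : postMeas P ρ = ∑ k, Nm k := rfl
    nth_rewrite 1 [hσsum]
    rw [Finset.sum_mul, Matrix.trace_sum]
    have step : ∀ k, (Nm k * matLog (postMeas P ρ)).trace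
        = (ρ * (Lk k ⊗ₖ P k)).trace := by
      intro k
      rw [← hpinch k]
      have hNk : Nm k = ((1 : Matrix a a ℂ) ⊗ₖ P k) * ρ * ((1 : Matrix a a ℂ) ⊗ₖ P k) := rfl
      rw [hNk]
      set A := (1 : Matrix a a ℂ) ⊗ₖ P k
      set L := matLog (postMeas P ρ)
      calc (A * ρ * A * L).trace = (L * (A * ρ) * A).trace := by
            rw [Matrix.trace_mul_cycle (A * ρ) A L]
        _ = (A * L * (A * ρ)).trace := by rw [Matrix.trace_mul_cycle L (A * ρ) A]
        _ = ((A * L * A) * ρ).trace := by simp only [Matrix.mul_assoc]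
        _ = (ρ * (A * L * A)).trace := Matrix.trace_mul_comm _ _
    rw [Finset.sum_congr rfl fun k _ => step k]
    rw [← Matrix.trace_sum, ← Finset.mul_sum, ← hLsum]
  -- relative entropy
  have hreρ : ((ρ * matLog ρ).trace).re
      = ∑ i, hρH.eigenvalues i * Real.logb 2 (hρH.eigenvalues i) :=
    re_trace_mul_matLog ρ hρH.eigenvectorUnitary hρH.eigenvalues (spectral_decomp hρH)
  have hvρ : vnEntropy ρ = -∑ i, hρH.eigenvalues i * Real.logb 2 (hρH.eigenvalues i) := by
    rw [vnEntropy, dif_pos hρH]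
  have hreσ : ((postMeas P ρ * matLog (postMeas P ρ)).trace).re
      = ∑ r : a × b, E r.2 r.1 * Real.logb 2 (E r.2 r.1) :=
    re_trace_mul_matLog _ Wu _ hσdec
  have hrel : relEntropy ρ (postMeas P ρ) = vnEntropy (postMeas P ρ) - vnEntropy ρ := by
    unfold relEntropy
    rw [Matrix.mul_sub, Matrix.trace_sub, Complex.sub_re, ← htreq, hreρ, hreσ, hSσ, hvρ]
    ring
  -- sum over product index
  have hprodsum : ∑ r : a × b, E r.2 r.1 * Real.logb 2 (E r.2 r.1)
      = ∑ k, ∑ l, E k l * Real.logb 2 (E k l) := by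
    rw [Fintype.sum_prod_type]
    exact Finset.sum_comm
  constructor
  · rw [hrel, hSσ, hSB, hprodsum]
    have hsum_total : ∑ k, probOf P ρ k * vnEntropy (condA P ρ k)
        = -∑ k, ∑ l, E k l * Real.logb 2 (E k l)
          + ∑ k, probOf P ρ k * Real.logb 2 (probOf P ρ k) := by
      rw [Finset.sum_congr rfl fun k _ => hcond k]
      rw [Finset.sum_add_distrib, ← Finset.sum_neg_distrib]
    rw [hsum_total]
    ring
  · rw [hrel, hSσ, hprodsum]
    have hbnd : -∑ k, ∑ l, E k l * Real.logb 2 (E k l) ≤ 2 * (Fintype.card (a × b)) := by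
      rw [← Finset.sum_neg_distrib]
      have : ∀ k : b, -∑ l, E k l * Real.logb 2 (E k l) ≤ 2 * (Fintype.card a) := by
        intro k
        rw [← Finset.sum_neg_distrib]
        calc ∑ l, -(E k l * Real.logb 2 (E k l)) ≤ ∑ _l : a, (2 : ℝ) :=
              Finset.sum_le_sum fun l _ => neg_mul_logb_le_two (hEnn k l)
          _ = 2 * (Fintype.card a) := by
              rw [Finset.sum_const, Finset.card_univ, nsmul_eq_mul]
              ring
      calc ∑ k, -∑ l, E k l * Real.logb 2 (E k l) ≤ ∑ _k : b, 2 * (Fintype.card a : ℝ) :=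
            Finset.sum_le_sum fun k _ => this k
        _ = 2 * (Fintype.card (a × b)) := by
            rw [Finset.sum_const, Finset.card_univ, nsmul_eq_mul, Fintype.card_prod]
            push_cast
            ring
    linarith

end Helpers

/-- N_RE(ρ^{AB}) + S_χ(ρ^{AB}) = I(ρ^{AB}), the quantum mutual information. -/
theorem stmt12 (ρ : Matrix (a × b) (a × b) ℂ) (hρ : IsDensity ρ) :
    NRE ρ + Schi ρ =
      vnEntropy (ptraceB ρ) + vnEntropy (ptraceA ρ) - vnEntropy ρ := by
  classical
  set c : ℝ := vnEntropy (ptraceB ρ) + vnEntropy (ptraceA ρ) - vnEntropy ρ with hc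
  set X : Set ℝ := {x | ∃ P : b → Matrix b b ℂ, IsRankOneMeas P ∧ Invariant P (ptraceA ρ) ∧
      x = relEntropy ρ (postMeas P ρ)} with hX
  set Y : Set ℝ := {x | ∃ P : b → Matrix b b ℂ, IsRankOneMeas P ∧ Invariant P (ptraceA ρ) ∧
      x = vnEntropy (ptraceB ρ) - ∑ k, probOf P ρ k * vnEntropy (condA P ρ k)} with hY
  have hNRE : NRE ρ = sSup X := rfl
  have hSchi : Schi ρ = sInf Y := rfl
  have hYX : Y = (fun x => c - x) '' X := by
    ext y
    constructor
    · rintro ⟨P, h1, h2, rfl⟩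
      refine ⟨relEntropy ρ (postMeas P ρ), ⟨P, h1, h2, rfl⟩, ?_⟩
      rw [(key ρ hρ P h1 h2).1, hc]
      ring
    · rintro ⟨x, ⟨P, h1, h2, rfl⟩, rfl⟩
      refine ⟨P, h1, h2, ?_⟩
      rw [(key ρ hρ P h1 h2).1, hc]
      ring
  obtain ⟨P0, hP01, hP02⟩ := exists_meas (ptraceA ρ) (ptraceA_isHermitian hρ.1.1)
  have hXne : X.Nonempty := ⟨relEntropy ρ (postMeas P0 ρ), P0, hP01, hP02, rfl⟩
  have hXbdd : BddAbove X := by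
    refine ⟨2 * (Fintype.card (a × b)) - vnEntropy ρ, fun x hx => ?_⟩
    obtain ⟨P, h1, h2, rfl⟩ := hx
    exact (key ρ hρ P h1 h2).2
  have hlub : IsLUB X (sSup X) := isLUB_csSup hXne hXbdd
  have hglb : IsGLB Y (c - sSup X) := by
    rw [hYX]
    constructor
    · rintro y ⟨x, hx, rfl⟩
      have := hlub.1 hx
      simp only
      linarith
    · intro l hl
      have hub : c - l ∈ upperBounds X := by
        intro x hx
        have := hl ⟨x, hx, rfl⟩
        simp only at this
        linarith
      have hs := hlub.2 hub
      linarith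
  have hYne : Y.Nonempty := by
    rw [hYX]
    exact hXne.image _
  have hInfY : sInf Y = c - sSup X := hglb.csInf_eq hYne
  rw [hNRE, hSchi, hInfY]
  ring

end
end

section
/- For the two-qubit Bell-diagonal state ρ = (1/4)(I⊗I + Σ_{i=1}^3 c_i σ_i⊗σ_i), the maximum over all rank-one projective measurements on qubit B of the average conditional entropy Σ_k p_k S(ρ_k^A) equals f(c_min), where f(x) = −((1+x)/2)log₂((1+x)/2) − ((1−x)/2)log₂((1−x)/2) and c_min = min{|c₁|,|c₂|,|c₃|}. -/
open scoped Kronecker Classical ComplexOrder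
open Matrix

noncomputable section

variable {n : Type*} [Fintype n] [DecidableEq n]

variable {a b : Type*} [Fintype a] [DecidableEq a] [Fintype b] [DecidableEq b]
variable {ι : Type*} [Fintype ι]

def pauli1 : Matrix (Fin 2) (Fin 2) ℂ := !![0, 1; 1, 0]
def pauli2 : Matrix (Fin 2) (Fin 2) ℂ := !![0, -Complex.I; Complex.I, 0]
def pauli3 : Matrix (Fin 2) (Fin 2) ℂ := !![1, 0; 0, -1]

/-- The Bell-diagonal two-qubit state (1/4)(I⊗I + Σᵢ cᵢ σᵢ⊗σᵢ). -/
def bellDiag (c₁ c₂ c₃ : ℝ) : Matrix (Fin 2 × Fin 2) (Fin 2 × Fin 2) ℂ :=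
  (1/4 : ℂ) • ((1 : Matrix (Fin 2 × Fin 2) (Fin 2 × Fin 2) ℂ)
    + (c₁ : ℂ) • (pauli1 ⊗ₖ pauli1) + (c₂ : ℂ) • (pauli2 ⊗ₖ pauli2)
    + (c₃ : ℂ) • (pauli3 ⊗ₖ pauli3))

/-- f(x) = binary entropy of (1+x)/2, base 2. -/
def binEnt (x : ℝ) : ℝ :=
  -((1 + x) / 2 * Real.logb 2 ((1 + x) / 2)) - (1 - x) / 2 * Real.logb 2 ((1 - x) / 2)


/-! ### Auxiliary machinery for `stmt16` -/

set_option maxHeartbeats 1000000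

section Stmt16Aux

/-- The rank-one projector `(I + n·σ)/2` (for unit `n`); also used as the
general qubit state `(I + w·σ)/2`. -/
def Pm (n₁ n₂ n₃ : ℝ) : Matrix (Fin 2) (Fin 2) ℂ :=
  !![((1+n₃)/2 : ℝ), ((n₁ : ℂ) - (n₂ : ℂ)*Complex.I)/2;
     ((n₁ : ℂ) + (n₂ : ℂ)*Complex.I)/2, ((1-n₃)/2 : ℝ)]

lemma Pm_herm (n₁ n₂ n₃ : ℝ) : (Pm n₁ n₂ n₃).IsHermitian := by
  ext i j
  fin_cases i <;> fin_cases j <;>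
    simp [Pm, Matrix.conjTranspose_apply, Complex.ext_iff]

lemma Pm_trace (n₁ n₂ n₃ : ℝ) : (Pm n₁ n₂ n₃).trace = 1 := by
  simp [Matrix.trace, Fin.sum_univ_two, Pm]
  ring

lemma Pm_det (n₁ n₂ n₃ : ℝ) :
    (Pm n₁ n₂ n₃).det = (((1 - (n₁^2+n₂^2+n₃^2))/4 : ℝ) : ℂ) := by
  simp [Pm, Matrix.det_fin_two, Complex.ext_iff, ← Complex.ofReal_pow]
  constructor <;> ring

lemma Pm_idem (n₁ n₂ n₃ : ℝ) (hn : n₁^2+n₂^2+n₃^2 = 1) :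
    Pm n₁ n₂ n₃ * Pm n₁ n₂ n₃ = Pm n₁ n₂ n₃ := by
  ext i j
  fin_cases i <;> fin_cases j <;>
    · simp [Pm, Matrix.mul_apply, Fin.sum_univ_two, Complex.ext_iff, ← Complex.ofReal_pow]
      first
      | (constructor <;> linarith [hn])
      | linarith [hn]
      | ring

lemma Pm_orth (n₁ n₂ n₃ : ℝ) (hn : n₁^2+n₂^2+n₃^2 = 1) :
    Pm n₁ n₂ n₃ * Pm (-n₁) (-n₂) (-n₃) = 0 := by
  ext i j
  fin_cases i <;> fin_cases j <;>
    · simp [Pm, Matrix.mul_apply, Fin.sum_univ_two, Complex.ext_iff, ← Complex.ofReal_pow]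
      first
      | (constructor <;> linarith [hn])
      | linarith [hn]
      | ring

lemma Pm_add_neg (n₁ n₂ n₃ : ℝ) : Pm n₁ n₂ n₃ + Pm (-n₁) (-n₂) (-n₃) = 1 := by
  ext i j
  fin_cases i <;> fin_cases j <;>
    · simp [Pm, Matrix.one_apply, Complex.ext_iff, ← Complex.ofReal_pow]
      first
      | (constructor <;> ring)
      | ring

lemma Pm_unit_of_idem (n₁ n₂ n₃ : ℝ)
    (h : Pm n₁ n₂ n₃ * Pm n₁ n₂ n₃ = Pm n₁ n₂ n₃) : n₁^2+n₂^2+n₃^2 = 1 := by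
  have h1 := congrFun (congrFun h 0) 0
  simp [Pm, Matrix.mul_apply, Fin.sum_univ_two, Complex.ext_iff,
    ← Complex.ofReal_pow] at h1
  nlinarith [h1]

lemma trace_eq_sum_eig {m : Type*} [Fintype m] [DecidableEq m]
    {A : Matrix m m ℂ} (hA : A.IsHermitian) :
    A.trace = ((∑ i, hA.eigenvalues i : ℝ) : ℂ) := by
  conv_lhs => rw [hA.spectral_theorem, Unitary.conjStarAlgAut_apply]
  rw [Matrix.trace_mul_cycle]
  simp [Matrix.trace_diagonal, Matrix.trace, Matrix.diag,
    (Matrix.mem_unitaryGroup_iff'.mp hA.eigenvectorUnitary.2)]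

lemma herm2_entropy (A : Matrix (Fin 2) (Fin 2) ℂ) (hA : A.IsHermitian)
    (htr : A.trace = 1) (t : ℝ) (hdet : A.det = (((1 - t^2)/4 : ℝ) : ℂ)) :
    vnEntropy A = binEnt t := by
  have hsum : hA.eigenvalues 0 + hA.eigenvalues 1 = 1 := by
    have := trace_eq_sum_eig hA
    rw [htr, Fin.sum_univ_two] at this
    exact_mod_cast this.symm
  have hprod : hA.eigenvalues 0 * hA.eigenvalues 1 = (1 - t^2)/4 := by
    have := hA.det_eq_prod_eigenvalues
    rw [hdet, Fin.prod_univ_two] at this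
    have h2 := congrArg Complex.re this.symm
    simpa [← Complex.ofReal_pow] using h2
  have hd : (hA.eigenvalues 0 - hA.eigenvalues 1)^2 = t^2 := by nlinarith
  have := sq_eq_sq_iff_eq_or_eq_neg.mp hd
  rw [vnEntropy, dif_pos hA, Fin.sum_univ_two, binEnt]
  rcases this with h | h
  · have h0 : hA.eigenvalues 0 = (1 + t)/2 := by linarith
    have h1 : hA.eigenvalues 1 = (1 - t)/2 := by linarith
    rw [h0, h1]; ring
  · have h0 : hA.eigenvalues 0 = (1 - t)/2 := by linarith
    have h1 : hA.eigenvalues 1 = (1 + t)/2 := by linarith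
    rw [h0, h1]; ring

lemma binEnt_eq_binEntropy (x : ℝ) :
    binEnt x = Real.binEntropy ((1+x)/2) / Real.log 2 := by
  rw [binEnt, Real.binEntropy, Real.logb, Real.logb, Real.log_inv, Real.log_inv]
  have h : 1 - (1+x)/2 = (1-x)/2 := by ring
  rw [h]
  field_simp
  ring

lemma binEnt_anti {t s : ℝ} (ht : 0 ≤ t) (hts : t ≤ s) (hs : s ≤ 1) :
    binEnt s ≤ binEnt t := by
  rw [binEnt_eq_binEntropy, binEnt_eq_binEntropy]
  have h2 : (0:ℝ) < Real.log 2 := Real.log_pos (by norm_num)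
  gcongr
  exact Real.binEntropy_strictAntiOn.antitoneOn (by constructor <;> [linarith; linarith])
    (by constructor <;> [linarith; linarith]) (by linarith)

lemma Pm_entropy (w₁ w₂ w₃ : ℝ) :
    vnEntropy (Pm w₁ w₂ w₃) = binEnt (Real.sqrt (w₁^2+w₂^2+w₃^2)) := by
  refine herm2_entropy _ (Pm_herm _ _ _) (Pm_trace _ _ _) _ ?_
  rw [Pm_det, Real.sq_sqrt (by positivity)]

lemma trace_kron_bell (c₁ c₂ c₃ n₁ n₂ n₃ : ℝ) :
    (((1 : Matrix (Fin 2) (Fin 2) ℂ) ⊗ₖ Pm n₁ n₂ n₃) * bellDiag c₁ c₂ c₃).trace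
      = 1/2 := by
  simp [Matrix.trace, Matrix.diag, Matrix.mul_apply, Fintype.sum_prod_type,
    Fin.sum_univ_two, bellDiag, Pm, pauli1, pauli2, pauli3, Matrix.one_apply]
  ring

lemma ptraceB_kron_bell (c₁ c₂ c₃ n₁ n₂ n₃ : ℝ) (hn : n₁^2+n₂^2+n₃^2 = 1) :
    ptraceB (((1 : Matrix (Fin 2) (Fin 2) ℂ) ⊗ₖ Pm n₁ n₂ n₃) * bellDiag c₁ c₂ c₃
        * ((1 : Matrix (Fin 2) (Fin 2) ℂ) ⊗ₖ Pm n₁ n₂ n₃))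
      = (1/2 : ℂ) • Pm (c₁*n₁) (c₂*n₂) (c₃*n₃) := by
  have hnC : (n₁:ℂ)^2+(n₂:ℂ)^2+(n₃:ℂ)^2 = 1 := by exact_mod_cast hn
  ext i j
  fin_cases i <;> fin_cases j
  all_goals
    simp [ptraceB, Matrix.mul_apply, Fintype.sum_prod_type, Fin.sum_univ_two,
      bellDiag, Pm, pauli1, pauli2, pauli3, Matrix.one_apply, Prod.ext_iff]
  all_goals
    first
    | linear_combination hnC/8 - (n₂:ℂ)^2/8 * Complex.I_sq
    | ring

lemma probOf_Pm (c₁ c₂ c₃ n₁ n₂ n₃ : ℝ) (P : Fin 2 → Matrix (Fin 2) (Fin 2) ℂ)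
    (k : Fin 2) (hk : P k = Pm n₁ n₂ n₃) :
    probOf P (bellDiag c₁ c₂ c₃) k = 1/2 := by
  rw [probOf, hk, trace_kron_bell]
  norm_num

lemma condA_Pm (c₁ c₂ c₃ n₁ n₂ n₃ : ℝ) (hn : n₁^2+n₂^2+n₃^2 = 1)
    (P : Fin 2 → Matrix (Fin 2) (Fin 2) ℂ) (k : Fin 2) (hk : P k = Pm n₁ n₂ n₃) :
    condA P (bellDiag c₁ c₂ c₃) k = Pm (c₁*n₁) (c₂*n₂) (c₃*n₃) := by
  rw [condA, hk, trace_kron_bell, ptraceB_kron_bell c₁ c₂ c₃ n₁ n₂ n₃ hn, smul_smul]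
  norm_num

lemma measVal (c₁ c₂ c₃ n₁ n₂ n₃ : ℝ) (hn : n₁^2+n₂^2+n₃^2 = 1)
    (P : Fin 2 → Matrix (Fin 2) (Fin 2) ℂ)
    (h0 : P 0 = Pm n₁ n₂ n₃) (h1 : P 1 = Pm (-n₁) (-n₂) (-n₃)) :
    ∑ k, probOf P (bellDiag c₁ c₂ c₃) k * vnEntropy (condA P (bellDiag c₁ c₂ c₃) k)
      = binEnt (Real.sqrt ((c₁*n₁)^2+(c₂*n₂)^2+(c₃*n₃)^2)) := by
  have hn' : (-n₁)^2+(-n₂)^2+(-n₃)^2 = 1 := by simpa [neg_sq] using hn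
  rw [Fin.sum_univ_two, probOf_Pm c₁ c₂ c₃ n₁ n₂ n₃ P 0 h0,
    probOf_Pm c₁ c₂ c₃ (-n₁) (-n₂) (-n₃) P 1 h1,
    condA_Pm c₁ c₂ c₃ n₁ n₂ n₃ hn P 0 h0,
    condA_Pm c₁ c₂ c₃ (-n₁) (-n₂) (-n₃) hn' P 1 h1,
    Pm_entropy, Pm_entropy]
  have h : (c₁*(-n₁))^2+(c₂*(-n₂))^2+(c₃*(-n₃))^2
      = (c₁*n₁)^2+(c₂*n₂)^2+(c₃*n₃)^2 := by ring
  rw [h]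
  ring

lemma meas_of_unit (n₁ n₂ n₃ : ℝ) (hn : n₁^2+n₂^2+n₃^2 = 1) :
    IsRankOneMeas ![Pm n₁ n₂ n₃, Pm (-n₁) (-n₂) (-n₃)] := by
  have hn' : (-n₁)^2+(-n₂)^2+(-n₃)^2 = 1 := by simpa [neg_sq] using hn
  have horth' : Pm (-n₁) (-n₂) (-n₃) * Pm n₁ n₂ n₃ = 0 := by
    have := Pm_orth (-n₁) (-n₂) (-n₃) hn'
    simpa using this
  refine ⟨⟨?_, ?_, ?_⟩, ?_⟩
  · intro k
    fin_cases k <;> simp [Pm_herm]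
  · intro j k
    fin_cases j <;> fin_cases k <;>
      simp [Pm_idem _ _ _ hn, Pm_idem _ _ _ hn', Pm_orth _ _ _ hn, horth']
  · simp [Fin.sum_univ_two, Pm_add_neg]
  · intro k
    fin_cases k <;> simp [Pm_trace]

lemma one_sub_Pm (n₁ n₂ n₃ : ℝ) :
    (1 : Matrix (Fin 2) (Fin 2) ℂ) - Pm n₁ n₂ n₃ = Pm (-n₁) (-n₂) (-n₃) := by
  rw [← Pm_add_neg n₁ n₂ n₃]
  abel

lemma meas_char (P : Fin 2 → Matrix (Fin 2) (Fin 2) ℂ) (h : IsRankOneMeas P) :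
    ∃ n₁ n₂ n₃ : ℝ, n₁^2+n₂^2+n₃^2 = 1 ∧ P 0 = Pm n₁ n₂ n₃ ∧
      P 1 = Pm (-n₁) (-n₂) (-n₃) := by
  obtain ⟨⟨hherm, horth, hsum⟩, htr⟩ := h
  have him0 : (P 0 0 0).im = 0 := by
    have := (hherm 0).apply 0 0
    have h2 := congrArg Complex.im this
    simp at h2
    linarith
  have h10 : P 0 1 0 = (starRingEnd ℂ) (P 0 0 1) := ((hherm 0).apply 1 0).symm
  have h11 : P 0 1 1 = 1 - P 0 0 0 := by
    have := htr 0
    rw [Matrix.trace, Fin.sum_univ_two] at this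
    simp [Matrix.diag] at this
    linear_combination this
  have hPm : P 0 = Pm (2*(P 0 0 1).re) (-(2*(P 0 0 1).im)) (2*(P 0 0 0).re - 1) := by
    rw [Matrix.eta_fin_two (P 0), h10, h11]
    ext i j
    fin_cases i <;> fin_cases j
    all_goals
      simp [Pm, Complex.ext_iff, him0]
    all_goals
      first
      | (constructor <;> ring)
      | ring
      | linarith [him0]
  have hidem : P 0 * P 0 = P 0 := by
    have := horth 0 0
    simpa using this
  rw [hPm] at hidem
  obtain ⟨n₁, n₂, n₃, hunit, hPm⟩ :
      ∃ n₁ n₂ n₃ : ℝ, n₁^2+n₂^2+n₃^2 = 1 ∧ P 0 = Pm n₁ n₂ n₃ :=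
    ⟨_, _, _, Pm_unit_of_idem _ _ _ hidem, hPm⟩
  refine ⟨n₁, n₂, n₃, hunit, hPm, ?_⟩
  have hsum2 : P 0 + P 1 = 1 := by rw [← hsum, Fin.sum_univ_two]
  have h1 : P 1 = 1 - P 0 := by rw [← hsum2]; abel
  rw [h1, hPm, one_sub_Pm]

lemma psd_bounds (c₁ c₂ c₃ : ℝ) (hpsd : (bellDiag c₁ c₂ c₃).PosSemidef) :
    |c₁| ≤ 1 ∧ |c₂| ≤ 1 ∧ |c₃| ≤ 1 := by
  have ineq : ∀ x : Fin 2 × Fin 2 → ℂ, ∀ r : ℝ,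
      dotProduct (star x) (bellDiag c₁ c₂ c₃ *ᵥ x) = (r : ℂ) → 0 ≤ r := by
    intro x r hx
    have := hpsd.dotProduct_mulVec_nonneg x
    rw [hx] at this
    exact_mod_cast this
  have hA := ineq (fun p => if p = (0,0) then 1 else if p = (1,1) then 1 else 0)
      ((1 + c₁ - c₂ + c₃)/2) (by
    simp [dotProduct, Matrix.mulVec, Fintype.sum_prod_type, Fin.sum_univ_two,
      bellDiag, pauli1, pauli2, pauli3, Matrix.one_apply, Prod.ext_iff,
      Complex.ext_iff]
    first | (constructor <;> ring) | ring | skip)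
  have hB := ineq (fun p => if p = (0,0) then 1 else if p = (1,1) then -1 else 0)
      ((1 - c₁ + c₂ + c₃)/2) (by
    simp [dotProduct, Matrix.mulVec, Fintype.sum_prod_type, Fin.sum_univ_two,
      bellDiag, pauli1, pauli2, pauli3, Matrix.one_apply, Prod.ext_iff,
      Complex.ext_iff]
    first | (constructor <;> ring) | ring | skip)
  have hC := ineq (fun p => if p = (0,1) then 1 else if p = (1,0) then 1 else 0)
      ((1 + c₁ + c₂ - c₃)/2) (by
    simp [dotProduct, Matrix.mulVec, Fintype.sum_prod_type, Fin.sum_univ_two,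
      bellDiag, pauli1, pauli2, pauli3, Matrix.one_apply, Prod.ext_iff,
      Complex.ext_iff]
    first | (constructor <;> ring) | ring | skip)
  have hD := ineq (fun p => if p = (0,1) then 1 else if p = (1,0) then -1 else 0)
      ((1 - c₁ - c₂ - c₃)/2) (by
    simp [dotProduct, Matrix.mulVec, Fintype.sum_prod_type, Fin.sum_univ_two,
      bellDiag, pauli1, pauli2, pauli3, Matrix.one_apply, Prod.ext_iff,
      Complex.ext_iff]
    first | (constructor <;> ring) | ring | skip)
  refine ⟨abs_le.mpr ⟨by linarith, by linarith⟩,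
    abs_le.mpr ⟨by linarith, by linarith⟩,
    abs_le.mpr ⟨by linarith, by linarith⟩⟩

end Stmt16Aux

/-- For the Bell-diagonal state, the maximal average conditional entropy over
rank-one projective measurements on B equals f(c_min). -/
theorem stmt16 (c₁ c₂ c₃ : ℝ) (hpsd : (bellDiag c₁ c₂ c₃).PosSemidef) :
    sSup {x | ∃ P : Fin 2 → Matrix (Fin 2) (Fin 2) ℂ, IsRankOneMeas P ∧
        x = ∑ k, probOf P (bellDiag c₁ c₂ c₃) k *
          vnEntropy (condA P (bellDiag c₁ c₂ c₃) k)} =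
      binEnt (min (min |c₁| |c₂|) |c₃|) := by
  obtain ⟨hb1, hb2, hb3⟩ := psd_bounds c₁ c₂ c₃ hpsd
  set cm := min (min |c₁| |c₂|) |c₃| with hcm
  have hcm0 : 0 ≤ cm := le_min (le_min (abs_nonneg _) (abs_nonneg _)) (abs_nonneg _)
  have hcm1 : cm ≤ |c₁| := (min_le_left _ _).trans (min_le_left _ _)
  have hcm2 : cm ≤ |c₂| := (min_le_left _ _).trans (min_le_right _ _)
  have hcm3 : cm ≤ |c₃| := min_le_right _ _
  -- upper bound
  have hub : ∀ x ∈ {x | ∃ P : Fin 2 → Matrix (Fin 2) (Fin 2) ℂ, IsRankOneMeas P ∧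
      x = ∑ k, probOf P (bellDiag c₁ c₂ c₃) k *
        vnEntropy (condA P (bellDiag c₁ c₂ c₃) k)}, x ≤ binEnt cm := by
    rintro x ⟨P, hP, rfl⟩
    obtain ⟨n₁, n₂, n₃, hn, h0, h1⟩ := meas_char P hP
    rw [measVal c₁ c₂ c₃ n₁ n₂ n₃ hn P h0 h1]
    have hS0 : (0:ℝ) ≤ (c₁*n₁)^2+(c₂*n₂)^2+(c₃*n₃)^2 := by positivity
    have ec1 : cm^2 ≤ c₁^2 := by nlinarith [hcm0, hcm1, sq_abs c₁]
    have ec2 : cm^2 ≤ c₂^2 := by nlinarith [hcm0, hcm2, sq_abs c₂]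
    have ec3 : cm^2 ≤ c₃^2 := by nlinarith [hcm0, hcm3, sq_abs c₃]
    have ed1 : c₁^2 ≤ 1 := by nlinarith [abs_nonneg c₁, sq_abs c₁, hb1]
    have ed2 : c₂^2 ≤ 1 := by nlinarith [abs_nonneg c₂, sq_abs c₂, hb2]
    have ed3 : c₃^2 ≤ 1 := by nlinarith [abs_nonneg c₃, sq_abs c₃, hb3]
    apply binEnt_anti hcm0
    · rw [Real.le_sqrt hcm0 hS0]
      nlinarith [sq_nonneg n₁, sq_nonneg n₂, sq_nonneg n₃]
    · calc Real.sqrt ((c₁*n₁)^2+(c₂*n₂)^2+(c₃*n₃)^2)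
          ≤ Real.sqrt 1 := Real.sqrt_le_sqrt (by nlinarith [sq_nonneg n₁, sq_nonneg n₂, sq_nonneg n₃])
        _ = 1 := Real.sqrt_one
  -- membership of binEnt cm
  have hex : ∃ n₁ n₂ n₃ : ℝ, n₁^2+n₂^2+n₃^2 = 1 ∧
      Real.sqrt ((c₁*n₁)^2+(c₂*n₂)^2+(c₃*n₃)^2) = cm := by
    rcases le_or_gt (min |c₁| |c₂|) |c₃| with h3 | h3
    · rcases le_total |c₁| |c₂| with h12 | h12
      · have hmin : min |c₁| |c₂| = |c₁| := min_eq_left h12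
        have hcme : cm = |c₁| := by rw [hcm, hmin, min_eq_left (hmin ▸ h3)]
        refine ⟨1, 0, 0, by norm_num, ?_⟩
        rw [show (c₁*1)^2+(c₂*0)^2+(c₃*0)^2 = c₁^2 by ring, Real.sqrt_sq_eq_abs, hcme]
      · have hmin : min |c₁| |c₂| = |c₂| := min_eq_right h12
        have hcme : cm = |c₂| := by rw [hcm, hmin, min_eq_left (hmin ▸ h3)]
        refine ⟨0, 1, 0, by norm_num, ?_⟩
        rw [show (c₁*0)^2+(c₂*1)^2+(c₃*0)^2 = c₂^2 by ring, Real.sqrt_sq_eq_abs, hcme]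
    · have hcme : cm = |c₃| := by rw [hcm, min_eq_right h3.le]
      refine ⟨0, 0, 1, by norm_num, ?_⟩
      rw [show (c₁*0)^2+(c₂*0)^2+(c₃*1)^2 = c₃^2 by ring, Real.sqrt_sq_eq_abs, hcme]
  obtain ⟨n₁, n₂, n₃, hn, hval⟩ := hex
  have hmem : binEnt cm ∈ {x | ∃ P : Fin 2 → Matrix (Fin 2) (Fin 2) ℂ, IsRankOneMeas P ∧
      x = ∑ k, probOf P (bellDiag c₁ c₂ c₃) k *
        vnEntropy (condA P (bellDiag c₁ c₂ c₃) k)} := by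
    refine ⟨![Pm n₁ n₂ n₃, Pm (-n₁) (-n₂) (-n₃)], meas_of_unit n₁ n₂ n₃ hn, ?_⟩
    rw [measVal c₁ c₂ c₃ n₁ n₂ n₃ hn _ (by simp) (by simp), hval]
  exact le_antisymm (csSup_le ⟨binEnt cm, hmem⟩ hub) (le_csSup ⟨binEnt cm, hub⟩ hmem)

end
end
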